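/- arXiv:2512.20450 — 3 statements merged into one kernel-verified Lean document; each statement's English description precedes it below -/
import Mathlib

section
/- Let m ≥ 1 and let l ≥ 3 and h be integers with 0 < h < l. Every simple m-colored quiver Q on vertices a₁, …, a_l whose only arrows form an (l,h)-central cycle (a₁a₂…a_l) (together with their skew-symmetric reverses) is mutation-equivalent to the quiver Ã_{l−h,h}. -/
open Finset

open scoped Classical

namespace CM

variable {V : Type*}

/-- Raw data of an `m`-colored quiver: `Q i j c` is the number of arrows
from `i` to `j` with color `c`. -/
abbrev CQ (V : Type*) := V → V → ℕ → ℕ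

/-- A colored quiver is simple if there is at most one arrow between distinct vertices. -/
def Simple (m : ℕ) (Q : CQ V) : Prop :=
  ∀ i j : V, i ≠ j → (∑ c ∈ Finset.range (m + 1), Q i j c) ≤ 1

/-- The axioms of an `m`-colored quiver: colors bounded by `m`, no loops,
monochromatic and skew-symmetric. -/
structure IsColoredQuiver (m : ℕ) (Q : CQ V) : Prop where
  colorBound : ∀ i j c, m < c → Q i j c = 0
  noLoops : ∀ i c, Q i i c = 0
  mono : ∀ i j c c', Q i j c ≠ 0 → c ≠ c' → Q i j c' = 0
  skew : ∀ i j c, c ≤ m → Q i j c = Q j i (m - c)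

/-- Colored mutation of `Q` at the vertex `j`. -/
noncomputable def mutate (m : ℕ) (Q : CQ V) (j : V) : CQ V :=
  fun i k c =>
    if m < c then 0
    else if i = k then 0
    else if k = j then Q i k ((c + 1) % (m + 1))
    else if i = j then Q i k ((c + m) % (m + 1))
    else
      (((Q i k c : ℤ) - ∑ t ∈ (Finset.range (m + 1)).erase c, (Q i k t : ℤ))
          + ((Q i j c : ℤ) - (if c = 0 then 0 else (Q i j (c - 1) : ℤ))) * (Q j k 0 : ℤ)
          + (Q i j m : ℤ) * ((Q j k c : ℤ) - (Q j k (c + 1) : ℤ))).toNat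

/-- Mutation equivalence: `Q'` is obtained from `Q` by a finite sequence of
colored mutations. -/
def MutEquiv (m : ℕ) (Q Q' : CQ V) : Prop :=
  ∃ js : List V, Q' = js.foldl (mutate m) Q

/-- Cyclic successor on `Fin l`. -/
def fsucc {l : ℕ} (i : Fin l) : Fin l := ⟨((i : ℕ) + 1) % l, Nat.mod_lt _ i.pos⟩

/-- There is an arrow from `i` to `j` (of some color `≤ m`). -/
def HasArrow (m : ℕ) (Q : CQ V) (i j : V) : Prop := ∃ c, c ≤ m ∧ Q i j c ≠ 0

/-- The underlying graph of a colored quiver. -/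
def underlying (m : ℕ) (Q : CQ V) : SimpleGraph V where
  Adj i j := i ≠ j ∧ (HasArrow m Q i j ∨ HasArrow m Q j i)
  symm := ⟨fun i j hh => ⟨Ne.symm hh.1, hh.2.symm⟩⟩
  loopless := ⟨fun i hh => hh.1 rfl⟩

/-- Number of neighbors of `v`. -/
noncomputable def deg (m : ℕ) (Q : CQ V) (v : V) : ℕ :=
  {u | (underlying m Q).Adj v u}.ncard

/-- A clique: any two distinct members are joined by arrows. -/
def IsClique (m : ℕ) (Q : CQ V) (s : Finset V) : Prop :=
  ∀ i ∈ s, ∀ j ∈ s, i ≠ j → HasArrow m Q i j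

/-- An `m`-admissible triangle. -/
def MAdmissible (m : ℕ) (Q : CQ V) (x y z : V) : Prop :=
  ∃ a b c, a ≤ m ∧ b ≤ m ∧ c ≤ m ∧ Q x y a ≠ 0 ∧ Q y z b ≠ 0 ∧ Q z x c ≠ 0 ∧
    (a + b + c = m - 1 ∨ a + b + c = 2 * m + 1)

/-- A hole: an induced cycle of length at least four in a graph. -/
def IsHole (G : SimpleGraph V) (n : ℕ) (v : Fin n → V) : Prop :=
  4 ≤ n ∧ Function.Injective v ∧
    ∀ i j : Fin n, G.Adj (v i) (v j) ↔ (j = fsucc i ∨ i = fsucc j)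

def HoleFree (G : SimpleGraph V) : Prop := ∀ (n : ℕ) (v : Fin n → V), ¬ IsHole G n v

/-- A quiver of type `A n`: the underlying graph is a path on `n` vertices. -/
def IsTypeA (m n : ℕ) (Q : CQ V) : Prop :=
  ∃ e : Fin n ≃ V, ∀ i j : Fin n,
    (underlying m Q).Adj (e i) (e j) ↔ ((j : ℕ) = (i : ℕ) + 1 ∨ (i : ℕ) = (j : ℕ) + 1)

/-- The class `𝒬ᵐₙ` of colored quivers of mutation type `A n`. -/
def ClassQA (m n : ℕ) {V : Type*} [Finite V] (Q : CQ V) : Prop :=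
  IsColoredQuiver m Q ∧ Simple m Q ∧ Nat.card V = n ∧ (underlying m Q).Connected ∧
    HoleFree (underlying m Q) ∧
    (∀ v : V, 0 < deg m Q v →
      ∃ C B : Finset V, IsClique m Q C ∧ IsClique m Q B ∧ v ∈ C ∧ v ∈ B ∧
        C.card + B.card = deg m Q v + 2 ∧ C.card ≤ m + 2 ∧ B.card ≤ m + 2 ∧
        ∀ i ∈ C, ∀ j ∈ B, i ≠ v → j ≠ v → ¬ HasArrow m Q i j) ∧
    (∀ x y z : V, x ≠ y → y ≠ z → x ≠ z → IsClique m Q {x, y, z} →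
      MAdmissible m Q x y z)

/-- Restriction of a colored quiver to a set of vertices. -/
def CQ.restrict (Q : CQ V) (S : Set V) : CQ S := fun i j c => Q i j c

/-- The subquiver keeping only the arrows inside `S`. -/
noncomputable def keepArrows (Q : CQ V) (S : Set V) : CQ V :=
  fun i j c => if i ∈ S ∧ j ∈ S then Q i j c else 0

/-- Delete all arrows joining vertices of the clique `C`. -/
noncomputable def delCliqueArrows (Q : CQ V) (C : Finset V) : CQ V :=
  fun i j c => if i ∈ C ∧ j ∈ C then 0 else Q i j c

/-- `C` is an almost extremal clique of `Q`: deleting its arrows leaves a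
connected component of type `A k` for some `k ≥ 1`. -/
def AlmostExtremal (m : ℕ) (Q : CQ V) (C : Finset V) : Prop :=
  IsClique m Q C ∧ 3 ≤ C.card ∧
    ∃ (w : V) (k : ℕ), 1 ≤ k ∧
      IsTypeA m k (CQ.restrict (delCliqueArrows Q C)
        {u | (underlying m (delCliqueArrows Q C)).Reachable w u})

/-- The quiver consisting of a single cycle with colors `c i` on the
arrows `i → i+1` (plus skew-symmetric reverses). -/
def cycleQuiver (m l : ℕ) (c : Fin l → ℕ) : CQ (Fin l) :=
  fun i j t =>
    (if i ≠ j ∧ j = fsucc i ∧ t = c i then 1 else 0) +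
    (if i ≠ j ∧ i = fsucc j ∧ t = m - c j then 1 else 0)

/-- The quiver `Ã_{p,q}`: a cycle with `p` arrows of color `0` followed by
`q` arrows of color `m`. -/
def tildeA (m p q : ℕ) : CQ (Fin (p + q)) :=
  cycleQuiver m (p + q) (fun i => if (i : ℕ) < p then 0 else m)

/-- `Q` is a copy of `Ã_{p,q}` on the vertex set `V`. -/
def IsTildeA (m p q : ℕ) (Q : CQ V) : Prop :=
  ∃ e : Fin (p + q) ≃ V, ∀ i j c, Q (e i) (e j) c = tildeA m p q i j c

/-- The linear quiver on `Fin l`, arrow `i → i+1` colored `c i`. -/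
def pathQuiver (m l : ℕ) (c : ℕ → ℕ) : CQ (Fin l) :=
  fun i j t =>
    if (j : ℕ) = (i : ℕ) + 1 ∧ t = c (i : ℕ) then 1
    else if (i : ℕ) = (j : ℕ) + 1 ∧ t = m - c (j : ℕ) then 1 else 0

/-- `Q` consists of a single `(l,h)`-central cycle. -/
def IsCentralCycleQuiver (m l h : ℕ) (Q : CQ V) : Prop :=
  ∃ (a : Fin l → V) (c : Fin l → ℕ), Function.Bijective a ∧ (∀ i, c i ≤ m) ∧
    (∑ i, c i = h * m) ∧ ∀ i j t, Q (a i) (a j) t = cycleQuiver m l c i j t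

/-- A triangle quiver on `Fin 3` with arrows `0 →^{c1} 1`, `0 →^{c2} 2`,
`1 →^{c3} 2` (plus skew-symmetric reverses). -/
def triQ (m c1 c2 c3 : ℕ) : CQ (Fin 3) := fun i j c =>
  if i = 0 ∧ j = 1 ∧ c = c1 then 1
  else if i = 1 ∧ j = 0 ∧ c = m - c1 then 1
  else if i = 0 ∧ j = 2 ∧ c = c2 then 1
  else if i = 2 ∧ j = 0 ∧ c = m - c2 then 1
  else if i = 1 ∧ j = 2 ∧ c = c3 then 1
  else if i = 2 ∧ j = 1 ∧ c = m - c3 then 1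
  else 0

/-- Data witnessing membership of `Q` in the class `𝒬ᵐ_{p,q}`. -/
structure QpqData (m p q : ℕ) {V : Type*} [Fintype V] (Q : CQ V) where
  colored : IsColoredQuiver m Q
  cardV : Nat.card V = p + q
  conn : (underlying m Q).Connected
  l : ℕ
  h : ℕ
  hl : 2 ≤ l
  hpos : 0 < h
  hlt : h < l
  a : Fin l → V
  col : Fin l → ℕ
  inja : Function.Injective a
  colLe : ∀ i, col i ≤ m
  arrows : ∀ i : Fin l, Q (a i) (a (fsucc i)) (col i) ≠ 0
  csum : ∑ i, col i = h * m
  induced : ∀ i j : Fin l, HasArrow m Q (a i) (a j) → (j = fsucc i ∨ i = fsucc j)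
  central_unique : ∀ (l' h' : ℕ) (a' : Fin l' → V) (col' : Fin l' → ℕ),
      2 ≤ l' → 0 < h' → h' < l' → Function.Injective a' → (∀ i, col' i ≤ m) →
      (∀ i : Fin l', Q (a' i) (a' (fsucc i)) (col' i) ≠ 0) →
      (∑ i, col' i = h' * m) →
      (∀ i j : Fin l', HasArrow m Q (a' i) (a' j) → (j = fsucc i ∨ i = fsucc j)) →
      Set.range a' = Set.range a
  double2 : l = 2 →
      (∀ c, c ≤ m → Q (a ⟨0, by omega⟩) (a ⟨1, by omega⟩) c ≠ 0 →
        Q (a ⟨0, by omega⟩) (a ⟨1, by omega⟩) c = 2) ∧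
      (∀ u v : V, u ≠ v → (u ∉ Set.range a ∨ v ∉ Set.range a) →
        (∑ c ∈ Finset.range (m + 1), Q u v c) ≤ 1)
  simple3 : 3 ≤ l → Simple m Q
  holes3 : l ≤ 3 → HoleFree (underlying m Q)
  holes4 : 4 ≤ l → ∀ (n : ℕ) (v : Fin n → V), IsHole (underlying m Q) n v →
      Set.range v = Set.range a
  vertexCliques : ∀ v : V, 0 < deg m Q v →
      ∃ Cr Bk : Finset V, IsClique m Q Cr ∧ IsClique m Q Bk ∧ v ∈ Cr ∧ v ∈ Bk ∧
        1 ≤ Cr.card ∧ Cr.card ≤ m + 2 ∧ 1 ≤ Bk.card ∧ Bk.card ≤ m + 2 ∧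
        deg m Q v = Cr.card + Bk.card - 2 - (if l = 2 then 1 else 0) ∧
        (∀ u ∈ Cr, ∀ w ∈ Bk, u ≠ v → w ≠ v → u ≠ w → HasArrow m Q u w →
          (l = 3 ∧ ({u, v, w} : Set V) = Set.range a))
  D : Fin l → Finset V
  Dclique : ∀ i, IsClique m Q (D i)
  Dmem : ∀ i : Fin l, a i ∈ D i ∧ a (fsucc i) ∈ D i
  Dcard : ∀ i, (D i).card ≤ m + 2
  Dmax : ∀ (i : Fin l) (D' : Finset V), IsClique m Q D' → a i ∈ D' →
      a (fsucc i) ∈ D' → D' ⊆ D i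
  admissible : ∀ x y z : V, x ≠ y → y ≠ z → x ≠ z → IsClique m Q {x, y, z} →
      ¬ (l = 3 ∧ ({x, y, z} : Set V) = Set.range a) → MAdmissible m Q x y z
  periph_tri : ∀ w : V, w ∉ Set.range a → ∀ i j : Fin l, w ∈ D i → w ∈ D j → i = j
  Del : CQ V
  hDel : Del = fun u v c => if ∃ i, u ∈ D i ∧ v ∈ D i then 0 else Q u v c
  nw : V → ℕ
  hnw : ∀ w : V, nw w = {u | (underlying m Del).Reachable w u}.ncard
  central_isolated : ∀ (i : Fin l) (u : V), ¬ (underlying m Del).Adj (a i) u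
  periph_disj : ∀ w w' : V, w ∉ Set.range a → w' ∉ Set.range a →
      (∃ i, w ∈ D i) → (∃ i, w' ∈ D i) → w ≠ w' →
      ¬ (underlying m Del).Reachable w w'
  periph_cover : ∀ u : V, u ∉ Set.range a →
      ∃ w : V, w ∉ Set.range a ∧ (∃ i, w ∈ D i) ∧ (underlying m Del).Reachable w u
  QwClass : ∀ w : V, w ∉ Set.range a → (∃ i, w ∈ D i) →
      ClassQA m (nw w) (CQ.restrict Del {u | (underlying m Del).Reachable w u})
  Wp : Finset V
  Wq : Finset V
  hWp : ∀ w : V, w ∈ Wp ↔ (w ∉ Set.range a ∧ ∃ (i : Fin l) (c1 c2 : ℕ),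
      w ∈ D i ∧ c1 ≤ m ∧ c2 ≤ m ∧ Q (a (fsucc i)) w c1 ≠ 0 ∧ Q w (a i) c2 ≠ 0 ∧
      col i + c1 + c2 = m - 1)
  hWq : ∀ w : V, w ∈ Wq ↔ (w ∉ Set.range a ∧ ∃ (i : Fin l) (c1 c2 : ℕ),
      w ∈ D i ∧ c1 ≤ m ∧ c2 ≤ m ∧ Q (a (fsucc i)) w c1 ≠ 0 ∧ Q w (a i) c2 ≠ 0 ∧
      col i + c1 + c2 = 2 * m + 1)
  hp : p = l - h + ∑ w ∈ Wp, nw w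
  hq : q = h + ∑ w ∈ Wq, nw w

/-- Membership in the class `𝒬ᵐ_{p,q}`. -/
def ClassQpq (m p q : ℕ) {V : Type*} [Fintype V] (Q : CQ V) : Prop :=
  Nonempty (QpqData m p q Q)

/-- `w` is a peripheral vertex. -/
def QpqData.Peripheral {m p q : ℕ} {V : Type*} [Fintype V] {Q : CQ V}
    (d : QpqData m p q Q) (w : V) : Prop :=
  w ∉ Set.range d.a ∧ ∃ i, w ∈ d.D i

/-- The connected component of `w` in the quiver obtained by deleting the
arrows of the boundary subquivers and of the central cycle. -/
def QpqData.comp {m p q : ℕ} {V : Type*} [Fintype V] {Q : CQ V}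
    (d : QpqData m p q Q) (w : V) : Set V :=
  {u | (underlying m d.Del).Reachable w u}

/-- The graph of color-`0` arrows of a colored quiver. -/
def zeroGraph (Q : CQ V) : SimpleGraph V where
  Adj i j := i ≠ j ∧ (Q i j 0 ≠ 0 ∨ Q j i 0 ≠ 0)
  symm := ⟨fun i j hh => ⟨Ne.symm hh.1, hh.2.symm⟩⟩
  loopless := ⟨fun i hh => hh.1 rfl⟩

/-- Number of color-`0` arrows of `R` inside `S` lying in no oriented
`3`-cycle of color-`0` arrows inside `S`. -/
noncomputable def zeroArrowsNoTri (R : CQ V) (S : Set V) : ℕ :=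
  {uv : V × V | uv.1 ∈ S ∧ uv.2 ∈ S ∧ R uv.1 uv.2 0 ≠ 0 ∧
    ¬ ∃ x ∈ S, R uv.2 x 0 ≠ 0 ∧ R x uv.1 0 ≠ 0}.ncard

/-- Number of oriented `3`-cycles of color-`0` arrows of `R` inside `S`. -/
noncomputable def zeroTriCount (R : CQ V) (S : Set V) : ℕ :=
  {t : Finset V | ∃ u v x : V, u ∈ S ∧ v ∈ S ∧ x ∈ S ∧ u ≠ v ∧ v ≠ x ∧ u ≠ x ∧
    t = {u, v, x} ∧ R u v 0 ≠ 0 ∧ R v x 0 ≠ 0 ∧ R x u 0 ≠ 0}.ncard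

/-- Number of oriented cycles of length `k` of color-`0` arrows of `R`
inside `S` (counted by their vertex sets). -/
noncomputable def orientKCycles (R : CQ V) (S : Set V) (k : ℕ) : ℕ :=
  {t : Finset V | ∃ v : Fin k → V, Function.Injective v ∧ (∀ i, v i ∈ S) ∧
    t = Finset.image v Finset.univ ∧ ∀ i, R (v i) (v (fsucc i)) 0 ≠ 0}.ncard



/-! ### Auxiliary development for `stmt1` -/

section Stmt1Aux

open Fin.NatCast Fin.CommRing

variable {m l : ℕ}

/-- Decrement mod `m+1`. -/
def decC (m x : ℕ) : ℕ := if x = 0 then m else x - 1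

/-- Increment mod `m+1`. -/
def incC (m y : ℕ) : ℕ := if y = m then 0 else y + 1

/-- The effect of mutating `cycleQuiver m l c` at `j` on colors. -/
def moveC (m : ℕ) {l : ℕ} [NeZero l] (c : Fin l → ℕ) (j : Fin l) : Fin l → ℕ :=
  Function.update (Function.update c (j - 1) (decC m (c (j - 1)))) j (incC m (c j))

/-- Reachability between colour functions. -/
def ReachC (m l : ℕ) (c c' : Fin l → ℕ) : Prop :=
  MutEquiv m (cycleQuiver m l c) (cycleQuiver m l c')

lemma reachC_refl (c : Fin l → ℕ) : ReachC m l c c := ⟨[], rfl⟩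

lemma reachC_trans {c₁ c₂ c₃ : Fin l → ℕ} (h₁ : ReachC m l c₁ c₂) (h₂ : ReachC m l c₂ c₃) :
    ReachC m l c₁ c₃ := by
  obtain ⟨js₁, e₁⟩ := h₁; obtain ⟨js₂, e₂⟩ := h₂
  exact ⟨js₁ ++ js₂, by rw [List.foldl_append, ← e₁, ← e₂]⟩

lemma neZero_of_three (hl : 3 ≤ l) : NeZero l := ⟨by omega⟩

section Basics

variable [NeZero l]

lemma fsucc_eq (hl : 1 < l) (i : Fin l) : fsucc i = i + ((1 : ℕ) : Fin l) := by
  unfold fsucc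
  apply Fin.ext
  rw [Fin.add_def, Fin.val_natCast]
  simp [Nat.mod_eq_of_lt hl]

lemma cast_val_lt {k : ℕ} (hk : k < l) : ((k : Fin l) : ℕ) = k := by
  rw [Fin.val_natCast]; exact Nat.mod_eq_of_lt hk

lemma pos_eq_iff (i : Fin l) {k₁ k₂ : ℕ} (h₁ : k₁ < l) (h₂ : k₂ < l) :
    i + (k₁ : Fin l) = i + (k₂ : Fin l) ↔ k₁ = k₂ := by
  rw [add_right_inj]
  constructor
  · intro h
    have := congrArg Fin.val h
    rwa [cast_val_lt h₁, cast_val_lt h₂] at this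
  · intro h; rw [h]

lemma pos_ne (i : Fin l) {k : ℕ} (h0 : 0 < k) (h : k < l) : i + (k : Fin l) ≠ i := by
  intro hh
  have : i + (k : Fin l) = i + ((0 : ℕ) : Fin l) := by simpa using hh
  have := (pos_eq_iff i h (by omega)).1 this
  omega

end Basics

section MoveLemma

variable [NeZero l]

lemma not_succ_succ (hl : 3 ≤ l) {i j : Fin l} (h₁ : j = fsucc i) (h₂ : i = fsucc j) : False := by
  haveI : NeZero l := neZero_of_three hl
  rw [fsucc_eq (by omega)] at h₁ h₂
  rw [h₁, add_assoc] at h₂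
  have h2 : ((1:ℕ) : Fin l) + ((1:ℕ):Fin l) = ((2:ℕ) : Fin l) := by push_cast; ring
  rw [h2] at h₂
  have : i + ((2:ℕ) : Fin l) = i + ((0:ℕ) : Fin l) := by simpa using h₂.symm
  have := (pos_eq_iff i (by omega) (by omega)).1 this
  omega

lemma succ_ne_self (hl : 3 ≤ l) (i : Fin l) : fsucc i ≠ i := by
  haveI : NeZero l := neZero_of_three hl
  rw [fsucc_eq (by omega)]
  exact pos_ne i (by omega) (by omega)

lemma cq_of_succ (hl : 3 ≤ l) {i j : Fin l} (h : j = fsucc i) (c : Fin l → ℕ) (t : ℕ) :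
    cycleQuiver m l c i j t = if t = c i then 1 else 0 := by
  have hij : i ≠ j := fun hh => succ_ne_self hl i (hh ▸ h.symm)
  have h₂ : ¬ (i = fsucc j) := fun hh => not_succ_succ hl h hh
  unfold cycleQuiver
  have e1 : (i ≠ j ∧ j = fsucc i ∧ t = c i) = (t = c i) := by
    simp only [eq_iff_iff]
    exact ⟨fun ⟨_, _, ht⟩ => ht, fun ht => ⟨hij, h, ht⟩⟩
  have e2 : (i ≠ j ∧ i = fsucc j ∧ t = m - c j) = False := by
    simp only [eq_iff_iff, iff_false]
    rintro ⟨-, hh, -⟩; exact h₂ hh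
  simp only [e1, e2, if_false, add_zero]

lemma cq_of_pred (hl : 3 ≤ l) {i j : Fin l} (h : i = fsucc j) (c : Fin l → ℕ) (t : ℕ) :
    cycleQuiver m l c i j t = if t = m - c j then 1 else 0 := by
  have hij : i ≠ j := fun hh => succ_ne_self hl j (hh ▸ h).symm
  have h₂ : ¬ (j = fsucc i) := fun hh => not_succ_succ hl hh h
  unfold cycleQuiver
  have e1 : (i ≠ j ∧ j = fsucc i ∧ t = c i) = False := by
    simp only [eq_iff_iff, iff_false]
    rintro ⟨-, hh, -⟩; exact h₂ hh
  have e2 : (i ≠ j ∧ i = fsucc j ∧ t = m - c j) = (t = m - c j) := by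
    simp only [eq_iff_iff]
    exact ⟨fun ⟨_, _, ht⟩ => ht, fun ht => ⟨hij, h, ht⟩⟩
  simp only [e1, e2, if_false, zero_add]

lemma cq_of_far {i j : Fin l} (h₁ : ¬ j = fsucc i) (h₂ : ¬ i = fsucc j)
    (c : Fin l → ℕ) (t : ℕ) : cycleQuiver m l c i j t = 0 := by
  unfold cycleQuiver
  simp only [h₁, h₂, false_and, and_false, if_false, add_zero]

lemma cq_diag (c : Fin l → ℕ) (i : Fin l) (t : ℕ) : cycleQuiver m l c i i t = 0 := by
  unfold cycleQuiver
  simp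

lemma decC_le (hm : 1 ≤ m) {x : ℕ} (hx : x ≤ m) : decC m x ≤ m := by
  unfold decC; split <;> omega

lemma incC_le {y : ℕ} (hy : y ≤ m) : incC m y ≤ m := by
  unfold incC; split <;> omega

lemma fin_one_ne_zero (hl : 3 ≤ l) : (1 : Fin l) ≠ 0 := by
  intro hh
  have h2 := congrArg Fin.val hh
  rw [Fin.val_one', Nat.mod_eq_of_lt (by omega : 1 < l), Fin.val_zero] at h2
  omega

lemma sub_one_ne (hl : 3 ≤ l) (j : Fin l) : j - 1 ≠ j := by
  intro hh
  exact fin_one_ne_zero hl (sub_eq_self.1 hh)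

lemma moveC_apply_sub (hl : 3 ≤ l) (c : Fin l → ℕ) (j : Fin l) :
    moveC m c j (j - 1) = decC m (c (j - 1)) := by
  unfold moveC
  rw [Function.update_of_ne (sub_one_ne hl j), Function.update_self]

lemma moveC_apply_self (c : Fin l → ℕ) (j : Fin l) : moveC m c j j = incC m (c j) := by
  unfold moveC; rw [Function.update_self]

lemma moveC_apply_other (c : Fin l → ℕ) {j v : Fin l} (h1 : v ≠ j) (h2 : v ≠ j - 1) :
    moveC m c j v = c v := by
  unfold moveC; rw [Function.update_of_ne h1, Function.update_of_ne h2]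

lemma moveC_le (hl : 3 ≤ l) (hm : 1 ≤ m) {c : Fin l → ℕ} (hc : ∀ i, c i ≤ m) (j : Fin l) :
    ∀ v, moveC m c j v ≤ m := by
  intro v
  by_cases h1 : v = j
  · rw [h1, moveC_apply_self]; exact incC_le (hc j)
  by_cases h2 : v = j - 1
  · rw [h2, moveC_apply_sub hl]; exact decC_le hm (hc _)
  · rw [moveC_apply_other c h1 h2]; exact hc v

lemma cq_zero_of_gt {c : Fin l → ℕ} (hc : ∀ i, c i ≤ m) {t : ℕ} (ht : m < t)
    (i k : Fin l) : cycleQuiver m l c i k t = 0 := by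
  unfold cycleQuiver
  rw [if_neg, if_neg]
  · rintro ⟨-, -, h⟩; omega
  · rintro ⟨-, -, h⟩; have := hc i; omega

lemma mod_succ_eq (t : ℕ) (ht : t ≤ m) : (t + 1) % (m + 1) = if t = m then 0 else t + 1 := by
  split
  · subst t; simp
  · exact Nat.mod_eq_of_lt (by omega)

lemma mod_pred_eq (t : ℕ) (ht : t ≤ m) : (t + m) % (m + 1) = if t = 0 then m else t - 1 := by
  split
  · subst t; simp
  · have : t + m = (m + 1) + (t - 1) := by omega
    rw [this, Nat.add_mod_left]
    exact Nat.mod_eq_of_lt (by omega)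

lemma succmod_eq_iff {t x : ℕ} (ht : t ≤ m) (hx : x ≤ m) (hxm : x ≠ m) :
    ((t + 1) % (m + 1) = x) ↔ t = decC m x := by
  rw [mod_succ_eq t ht]; unfold decC; split <;> split <;> omega

lemma succmod_eq_iff' {t y : ℕ} (hm : 1 ≤ m) (ht : t ≤ m) (hy : y ≤ m) (hy0 : y ≠ 0) :
    ((t + 1) % (m + 1) = m - y) ↔ t = m - incC m y := by
  rw [mod_succ_eq t ht]; unfold incC; split <;> split <;> omega

lemma predmod_eq_iff {t y : ℕ} (ht : t ≤ m) (hy : y ≤ m) (hy0 : y ≠ 0) :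
    ((t + m) % (m + 1) = y) ↔ t = incC m y := by
  rw [mod_pred_eq t ht]; unfold incC; split <;> split <;> omega

lemma predmod_eq_iff' {t x : ℕ} (hm : 1 ≤ m) (ht : t ≤ m) (hx : x ≤ m) (hxm : x ≠ m) :
    ((t + m) % (m + 1) = m - x) ↔ t = m - decC m x := by
  rw [mod_pred_eq t ht]; unfold decC; split <;> split <;> omega

lemma fsucc_sub_one (hl : 3 ≤ l) (j : Fin l) : fsucc (j - 1) = j := by
  rw [fsucc_eq (by omega), Nat.cast_one, sub_add_cancel]

lemma eq_sub_one_of_fsucc (hl : 3 ≤ l) {i j : Fin l} (h : j = fsucc i) : i = j - 1 := by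
  rw [fsucc_eq (by omega), Nat.cast_one] at h
  rw [h, add_sub_cancel_right]

/-- The key single-mutation lemma. -/
lemma mutate_cycleQuiver (hl : 3 ≤ l) (hm : 1 ≤ m) (c : Fin l → ℕ) (hc : ∀ i, c i ≤ m)
    (j : Fin l) (ha : c (j - 1) ≠ m) (hb : c j ≠ 0) :
    mutate m (cycleQuiver m l c) j = cycleQuiver m l (moveC m c j) := by
  funext i k t
  simp only [mutate]
  by_cases htm : m < t
  · rw [if_pos htm, cq_zero_of_gt (moveC_le hl hm hc j) htm]
  rw [if_neg htm]
  have ht : t ≤ m := by omega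
  by_cases hik : i = k
  · rw [if_pos hik, hik, cq_diag]
  rw [if_neg hik]
  by_cases hkj : k = j
  · subst hkj
    rw [if_pos rfl]
    by_cases h1 : k = fsucc i
    · have hi : i = k - 1 := eq_sub_one_of_fsucc hl h1
      have ha' : c i ≠ m := by rw [hi]; exact ha
      rw [cq_of_succ hl h1, cq_of_succ hl h1, hi, moveC_apply_sub hl, ← hi]
      by_cases hcond : (t + 1) % (m + 1) = c i
      · rw [if_pos hcond, if_pos ((succmod_eq_iff ht (hc i) ha').1 hcond)]
      · rw [if_neg hcond, if_neg (fun hh => hcond ((succmod_eq_iff ht (hc i) ha').2 hh))]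
    · by_cases h2 : i = fsucc k
      · rw [cq_of_pred hl h2, cq_of_pred hl h2]
        rw [moveC_apply_self]
        by_cases hcond : (t + 1) % (m + 1) = m - c k
        · rw [if_pos hcond, if_pos (((succmod_eq_iff' hm ht (hc k) hb).1 hcond))]
        · rw [if_neg hcond, if_neg (fun hh => hcond ((succmod_eq_iff' hm ht (hc k) hb).2 hh))]
      · rw [cq_of_far h1 h2, cq_of_far h1 h2]
  rw [if_neg hkj]
  by_cases hij : i = j
  · subst hij
    rw [if_pos rfl]
    by_cases h1 : k = fsucc i
    · rw [cq_of_succ hl h1, cq_of_succ hl h1]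
      rw [moveC_apply_self]
      by_cases hcond : (t + m) % (m + 1) = c i
      · rw [if_pos hcond, if_pos ((predmod_eq_iff ht (hc i) hb).1 hcond)]
      · rw [if_neg hcond, if_neg (fun hh => hcond ((predmod_eq_iff ht (hc i) hb).2 hh))]
    · by_cases h2 : i = fsucc k
      · have hk : k = i - 1 := eq_sub_one_of_fsucc hl h2
        rw [cq_of_pred hl h2, cq_of_pred hl h2, hk, moveC_apply_sub hl]
        rw [← hk]
        by_cases hcond : (t + m) % (m + 1) = m - c k
        · rw [if_pos hcond, if_pos ((predmod_eq_iff' hm ht (hc k) (hk ▸ ha)).1 hcond)]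
        · rw [if_neg hcond,
            if_neg (fun hh => hcond ((predmod_eq_iff' hm ht (hc k) (hk ▸ ha)).2 hh))]
      · rw [cq_of_far h1 h2, cq_of_far h1 h2]
  rw [if_neg hij]
  -- generic branch
  have hB : cycleQuiver m l c j k 0 = 0 := by
    by_cases h1 : k = fsucc j
    · rw [cq_of_succ hl h1, if_neg (fun hh => hb hh.symm)]
    by_cases h2 : j = fsucc k
    · have hk : k = j - 1 := eq_sub_one_of_fsucc hl h2
      rw [cq_of_pred hl h2, if_neg]
      rw [← hk] at ha
      have := hc k; omega
    · exact cq_of_far h1 h2 c 0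
  have hC : cycleQuiver m l c i j m = 0 := by
    by_cases h1 : j = fsucc i
    · have hi : i = j - 1 := eq_sub_one_of_fsucc hl h1
      rw [cq_of_succ hl h1, if_neg (fun hh => ha (hi ▸ hh.symm))]
    by_cases h2 : i = fsucc j
    · rw [cq_of_pred hl h2, if_neg]
      have := hc j; omega
    · exact cq_of_far h1 h2 c m
  rw [hB, hC]
  push_cast
  rw [mul_zero, zero_mul, add_zero, add_zero]
  -- RHS colors are unchanged in this branch
  have hRHS : cycleQuiver m l (moveC m c j) i k t = cycleQuiver m l c i k t := by
    by_cases h1 : k = fsucc i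
    · rw [cq_of_succ hl h1, cq_of_succ hl h1, moveC_apply_other c hij]
      intro hh
      exact hkj (by rw [h1, hh, fsucc_sub_one hl])
    by_cases h2 : i = fsucc k
    · rw [cq_of_pred hl h2, cq_of_pred hl h2, moveC_apply_other c hkj]
      intro hh
      exact hij (by rw [h2, hh, fsucc_sub_one hl])
    · rw [cq_of_far h1 h2, cq_of_far h1 h2]
  rw [hRHS]
  -- now show toNat of (Q i k t - sum) equals Q i k t
  by_cases h1 : k = fsucc i
  · have hQ : ∀ s, cycleQuiver m l c i k s = if s = c i then 1 else 0 := cq_of_succ hl h1 c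
    simp only [hQ]
    push_cast
    rw [Finset.sum_ite_eq' ((Finset.range (m + 1)).erase t) (c i) (fun _ => (1 : ℤ))]
    by_cases hct : t = c i
    · rw [if_pos hct, if_neg (by simp [hct.symm] : ¬ c i ∈ (Finset.range (m+1)).erase t),
        if_pos hct]
      decide
    · rw [if_neg hct,
        if_pos (Finset.mem_erase.2 ⟨fun hh => hct hh.symm, Finset.mem_range.2 (by
          have := hc i; omega)⟩), if_neg hct]
      decide
  · by_cases h2 : i = fsucc k
    · have hQ : ∀ s, cycleQuiver m l c i k s = if s = m - c k then 1 else 0 :=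
        cq_of_pred hl h2 c
      simp only [hQ]
      push_cast
      rw [Finset.sum_ite_eq' ((Finset.range (m + 1)).erase t) (m - c k) (fun _ => (1 : ℤ))]
      by_cases hct : t = m - c k
      · rw [if_pos hct, if_neg (by simp [hct.symm] : ¬ m - c k ∈ (Finset.range (m+1)).erase t),
          if_pos hct]
        decide
      · rw [if_neg hct,
          if_pos (Finset.mem_erase.2 ⟨fun hh => hct hh.symm, Finset.mem_range.2 (by omega)⟩),
          if_neg hct]
        decide
    · have hQ : ∀ s, cycleQuiver m l c i k s = 0 := cq_of_far h1 h2 c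
      simp only [hQ]
      simp



end MoveLemma

section MacroLayer

variable [NeZero l]

lemma reach_move (hl : 3 ≤ l) (hm : 1 ≤ m) {c : Fin l → ℕ} (hc : ∀ i, c i ≤ m)
    (j : Fin l) (ha : c (j - 1) ≠ m) (hb : c j ≠ 0) : ReachC m l c (moveC m c j) :=
  ⟨[j], by simp [mutate_cycleQuiver hl hm c hc j ha hb]⟩

lemma pos_add_cast (i : Fin l) (k₁ k₂ : ℕ) :
    i + ((k₁ : ℕ) : Fin l) + ((k₂ : ℕ) : Fin l) = i + (((k₁ + k₂ : ℕ)) : Fin l) := by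
  push_cast; ring

lemma pos_sub_one (hl : 3 ≤ l) (i : Fin l) (k : ℕ) :
    i + (((k + 1 : ℕ)) : Fin l) - 1 = i + ((k : ℕ) : Fin l) := by
  have : ((k + 1 : ℕ) : Fin l) = ((k : ℕ) : Fin l) + 1 := by push_cast; ring
  rw [this, ← add_assoc, add_sub_cancel_right]

lemma pos_ne_of_ne (i : Fin l) {k₁ k₂ : ℕ} (h₁ : k₁ < l) (h₂ : k₂ < l) (h : k₁ ≠ k₂) :
    i + ((k₁ : ℕ) : Fin l) ≠ i + ((k₂ : ℕ) : Fin l) := fun hh => h ((pos_eq_iff i h₁ h₂).1 hh)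

lemma self_ne_pos (i : Fin l) {k : ℕ} (h0 : 0 < k) (h : k < l) : i ≠ i + ((k : ℕ) : Fin l) :=
  fun hh => pos_ne i h0 h hh.symm

lemma update2_le {c : Fin l → ℕ} (hc : ∀ v, c v ≤ m) {p q : Fin l} {x y : ℕ}
    (hx : x ≤ m) (hy : y ≤ m) : ∀ v, Function.update (Function.update c p x) q y v ≤ m := by
  intro v
  rcases eq_or_ne v q with rfl | hq
  · rwa [Function.update_self]
  rw [Function.update_of_ne hq]
  rcases eq_or_ne v p with rfl | hp
  · rwa [Function.update_self]
  · rw [Function.update_of_ne hp]; exact hc v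

lemma sum_update2 {c : Fin l → ℕ} {p q : Fin l} (hpq : p ≠ q) (x y : ℕ) :
    (∑ v, Function.update (Function.update c p x) q y v) + c p + c q
      = (∑ v, c v) + x + y := by
  classical
  rw [Finset.sum_update_of_mem (Finset.mem_univ q), ← Finset.erase_eq,
    Finset.sum_update_of_mem (Finset.mem_erase.2 ⟨hpq, Finset.mem_univ p⟩), ← Finset.erase_eq]
  have h1 : ∑ v, c v = c q + ∑ v ∈ Finset.univ.erase q, c v :=
    (Finset.add_sum_erase _ c (Finset.mem_univ q)).symm
  have h2 : ∑ v ∈ Finset.univ.erase q, c v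
      = c p + ∑ v ∈ (Finset.univ.erase q).erase p, c v :=
    (Finset.add_sum_erase _ c (Finset.mem_erase.2 ⟨hpq, Finset.mem_univ p⟩)).symm
  omega

section Runs

variable (hl : 3 ≤ l) (hm : 1 ≤ m)
include hl hm

/-- Push one unit from `i` across a run of `b` piles equal to `m`. -/
lemma reach_ASC : ∀ (b : ℕ) (c : Fin l → ℕ) (i : Fin l), (∀ v, c v ≤ m) → b + 1 < l →
    c i ≠ m → (∀ k, 1 ≤ k → k ≤ b → c (i + ((k : ℕ) : Fin l)) = m) →
    c (i + (((b + 1 : ℕ)) : Fin l)) ≠ 0 →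
    ReachC m l c (Function.update (Function.update c i (decC m (c i)))
      (i + (((b + 1 : ℕ)) : Fin l)) (incC m (c (i + (((b + 1 : ℕ)) : Fin l))))) := by
  intro b
  induction b with
  | zero =>
    intro c i hc hbl hi hrun hy
    have hj : (i + (((1 : ℕ)) : Fin l)) - 1 = i := by simpa using pos_sub_one hl i 0
    have := reach_move hl hm hc (i + (((1:ℕ)) : Fin l)) (by rwa [hj]) hy
    unfold moveC at this
    rwa [hj] at this
  | succ b IH =>
    intro c i hc hbl hi hrun hy
    have h1m : c (i + (((1:ℕ)) : Fin l)) = m := hrun 1 le_rfl (by omega)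
    have hj : (i + (((1 : ℕ)) : Fin l)) - 1 = i := by simpa using pos_sub_one hl i 0
    have step1 : ReachC m l c (moveC m c (i + (((1:ℕ)) : Fin l))) :=
      reach_move hl hm hc _ (by rwa [hj]) (by rw [h1m]; omega)
    set c₁ := moveC m c (i + (((1:ℕ)) : Fin l)) with hc₁
    have hne1 : i ≠ i + (((1:ℕ)) : Fin l) := self_ne_pos i (by omega) (by omega)
    have hc₁i : c₁ i = decC m (c i) := by
      rw [hc₁]; unfold moveC; rw [hj]
      rw [Function.update_of_ne hne1, Function.update_self]
    have hc₁1 : c₁ (i + (((1:ℕ)) : Fin l)) = 0 := by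
      rw [hc₁]; unfold moveC
      rw [Function.update_self, h1m]; unfold incC; simp
    have hc₁o : ∀ v, v ≠ i → v ≠ i + (((1:ℕ)) : Fin l) → c₁ v = c v := by
      intro v hv1 hv2
      rw [hc₁]; unfold moveC; rw [hj]
      rw [Function.update_of_ne hv2, Function.update_of_ne hv1]
    have hc₁le : ∀ v, c₁ v ≤ m := by
      rw [hc₁]; exact moveC_le hl hm hc _
    have IH' := IH c₁ (i + (((1:ℕ)) : Fin l)) hc₁le (by omega)
      (by rw [hc₁1]; omega)
      (by
        intro k hk1 hkb
        rw [pos_add_cast]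
        rw [hc₁o _ (pos_ne i (by omega) (by omega))
          (pos_ne_of_ne i (by omega) (by omega) (by omega))]
        exact hrun (1 + k) (by omega) (by omega))
      (by
        rw [pos_add_cast]
        rw [hc₁o _ (pos_ne i (by omega) (by omega))
          (pos_ne_of_ne i (by omega) (by omega) (by omega))]
        have h12 : (1 + (b + 1)) = b + 2 := by omega
        rw [h12]; exact hy)
    refine reachC_trans (reachC_trans step1 IH') ?_
    have e12 : (i + (((1:ℕ)) : Fin l)) + (((b + 1 : ℕ)) : Fin l)
        = i + (((b + 2 : ℕ)) : Fin l) := by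
      rw [pos_add_cast, show 1 + (b + 1) = b + 2 from by omega]
    have hv1 : c₁ (i + (((b + 2 : ℕ)) : Fin l)) = c (i + (((b + 2 : ℕ)) : Fin l)) :=
      hc₁o _ (pos_ne i (by omega) (by omega))
        (pos_ne_of_ne i (by omega) (by omega) (by omega))
    have hfin : (Function.update (Function.update c₁ (i + (((1:ℕ)) : Fin l))
        (decC m (c₁ (i + (((1:ℕ)) : Fin l)))))
        ((i + (((1:ℕ)) : Fin l)) + (((b + 1 : ℕ)) : Fin l))
        (incC m (c₁ ((i + (((1:ℕ)) : Fin l)) + (((b + 1 : ℕ)) : Fin l)))))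
        = (Function.update (Function.update c i (decC m (c i)))
          (i + (((b + 2 : ℕ)) : Fin l)) (incC m (c (i + (((b + 2 : ℕ)) : Fin l))))) := by
      rw [e12, hv1, hc₁1]
      funext v
      rcases eq_or_ne v (i + (((b + 2 : ℕ)) : Fin l)) with rfl | hvb
      · rw [Function.update_self, Function.update_self]
      rw [Function.update_of_ne hvb, Function.update_of_ne hvb]
      rcases eq_or_ne v (i + (((1:ℕ)) : Fin l)) with rfl | hv1'
      · rw [Function.update_self, Function.update_of_ne hne1.symm, h1m]
        unfold decC; split <;> omega
      rw [Function.update_of_ne hv1']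
      rcases eq_or_ne v i with rfl | hvi
      · rw [Function.update_self, hc₁i]
      · rw [Function.update_of_ne hvi, hc₁o v hvi hv1']
    rw [hfin] at IH' ⊢
    exact reachC_refl _


/-- Push one unit from `i` across a run of `a` piles equal to `0`. -/
lemma reach_DESC : ∀ (a : ℕ) (c : Fin l → ℕ) (i : Fin l), (∀ v, c v ≤ m) → a + 1 < l →
    c i ≠ m → (∀ k, 1 ≤ k → k ≤ a → c (i + ((k : ℕ) : Fin l)) = 0) →
    c (i + (((a + 1 : ℕ)) : Fin l)) ≠ 0 →
    ReachC m l c (Function.update (Function.update c i (decC m (c i)))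
      (i + (((a + 1 : ℕ)) : Fin l)) (incC m (c (i + (((a + 1 : ℕ)) : Fin l))))) := by
  intro a
  induction a with
  | zero =>
    intro c i hc hal hi hrun hy
    have hj : (i + (((1 : ℕ)) : Fin l)) - 1 = i := by simpa using pos_sub_one hl i 0
    have := reach_move hl hm hc (i + (((1:ℕ)) : Fin l)) (by rwa [hj]) hy
    unfold moveC at this
    rwa [hj] at this
  | succ a IH =>
    intro c i hc hal hi hrun hy
    have h0 : c (i + (((a+1:ℕ)) : Fin l)) = 0 := hrun (a+1) (by omega) le_rfl
    have hj : (i + (((a + 2 : ℕ)) : Fin l)) - 1 = i + (((a + 1 : ℕ)) : Fin l) :=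
      pos_sub_one hl i (a + 1)
    have step1 : ReachC m l c (moveC m c (i + (((a+2:ℕ)) : Fin l))) :=
      reach_move hl hm hc _ (by rw [hj, h0]; omega) hy
    set c₁ := moveC m c (i + (((a+2:ℕ)) : Fin l)) with hc₁
    have hne12 : i + (((a+1:ℕ)) : Fin l) ≠ i + (((a+2:ℕ)) : Fin l) :=
      pos_ne_of_ne i (by omega) (by omega) (by omega)
    have hc₁a1 : c₁ (i + (((a+1:ℕ)) : Fin l)) = m := by
      rw [hc₁]; unfold moveC; rw [hj]
      rw [Function.update_of_ne hne12, Function.update_self, h0]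
      unfold decC; simp
    have hc₁a2 : c₁ (i + (((a+2:ℕ)) : Fin l)) = incC m (c (i + (((a+2:ℕ)) : Fin l))) := by
      rw [hc₁]; unfold moveC; rw [Function.update_self]
    have hc₁o : ∀ v, v ≠ i + (((a+1:ℕ)) : Fin l) → v ≠ i + (((a+2:ℕ)) : Fin l) →
        c₁ v = c v := by
      intro v hv1 hv2
      rw [hc₁]; unfold moveC; rw [hj]
      rw [Function.update_of_ne hv2, Function.update_of_ne hv1]
    have hc₁le : ∀ v, c₁ v ≤ m := by rw [hc₁]; exact moveC_le hl hm hc _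
    have hc₁i : c₁ i = c i :=
      hc₁o i (self_ne_pos i (by omega) (by omega)) (self_ne_pos i (by omega) (by omega))
    have IH' := IH c₁ i hc₁le (by omega) (by rw [hc₁i]; exact hi)
      (by
        intro k hk1 hka
        rw [hc₁o _ (pos_ne_of_ne i (by omega) (by omega) (by omega))
          (pos_ne_of_ne i (by omega) (by omega) (by omega))]
        exact hrun k hk1 (by omega))
      (by rw [hc₁a1]; omega)
    refine reachC_trans (reachC_trans step1 IH') ?_
    have hfin : (Function.update (Function.update c₁ i (decC m (c₁ i)))
        (i + (((a + 1 : ℕ)) : Fin l)) (incC m (c₁ (i + (((a + 1 : ℕ)) : Fin l)))))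
        = (Function.update (Function.update c i (decC m (c i)))
          (i + (((a + 2 : ℕ)) : Fin l)) (incC m (c (i + (((a + 2 : ℕ)) : Fin l))))) := by
      rw [hc₁a1, hc₁i]
      funext v
      rcases eq_or_ne v (i + (((a + 1 : ℕ)) : Fin l)) with rfl | hva1
      · rw [Function.update_self, Function.update_of_ne hne12,
          Function.update_of_ne (pos_ne i (by omega) (by omega)), h0]
        unfold incC; simp
      rw [Function.update_of_ne hva1]
      rcases eq_or_ne v (i + (((a + 2 : ℕ)) : Fin l)) with rfl | hva2
      · rw [Function.update_self, Function.update_of_ne (pos_ne i (by omega) (by omega)),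
          hc₁a2]
      rcases eq_or_ne v i with rfl | hvi
      · rw [Function.update_self, Function.update_of_ne hva2, Function.update_self]
      · rw [Function.update_of_ne hvi, Function.update_of_ne hva2,
          Function.update_of_ne hvi, hc₁o v hva1 hva2]
    rw [hfin] at IH' ⊢
    exact reachC_refl _

/-- Transfer one unit from `i` to `i + (b+a+1)` across a sorted binary wall
(`b` piles equal to `m` followed by `a` piles equal to `0`). -/
lemma reach_MT (c : Fin l → ℕ) (hc : ∀ v, c v ≤ m) (i : Fin l) (b a : ℕ)
    (hd : b + a + 1 < l) (hx0 : c i ≠ 0) (hxm : c i ≠ m)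
    (hw1 : ∀ k, 1 ≤ k → k ≤ b → c (i + ((k : ℕ) : Fin l)) = m)
    (hw2 : ∀ k, b + 1 ≤ k → k ≤ b + a → c (i + ((k : ℕ) : Fin l)) = 0)
    (hy0 : c (i + (((b + a + 1 : ℕ)) : Fin l)) ≠ 0)
    (hym : c (i + (((b + a + 1 : ℕ)) : Fin l)) ≠ m) :
    ReachC m l c (Function.update (Function.update c i (c i - 1))
      (i + (((b + a + 1 : ℕ)) : Fin l)) (c (i + (((b + a + 1 : ℕ)) : Fin l)) + 1)) := by
  have hdec : decC m (c i) = c i - 1 := by unfold decC; simp [hx0]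
  have hinc : incC m (c (i + (((b + a + 1 : ℕ)) : Fin l)))
      = c (i + (((b + a + 1 : ℕ)) : Fin l)) + 1 := by unfold incC; rw [if_neg hym]
  rcases Nat.eq_zero_or_pos a with rfl | ha
  · have := reach_ASC hl hm b c i hc (by omega) hxm hw1 hy0
    rw [hdec, hinc] at this
    exact this
  -- a ≥ 1 : first DESC on the zero run, then ASC on the m-run
  obtain ⟨a', rfl⟩ : ∃ a', a = a' + 1 := ⟨a - 1, by omega⟩
  have hs0 : c (i + (((b+1:ℕ)) : Fin l)) = 0 := hw2 (b+1) le_rfl (by omega)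
  have hdesc := reach_DESC hl hm a' c (i + (((b+1:ℕ)) : Fin l))
    hc (by omega) (by rw [hs0]; omega)
    (by
      intro k hk1 hka
      rw [pos_add_cast]
      exact hw2 (b+1+k) (by omega) (by omega))
    (by
      rw [pos_add_cast, show b + 1 + (a' + 1) = b + (a'+1) + 1 from by omega]
      exact hy0)
  rw [pos_add_cast, show b + 1 + (a' + 1) = b + (a'+1) + 1 from by omega] at hdesc
  set y := c (i + (((b + (a'+1) + 1 : ℕ)) : Fin l)) with hy
  set c₁ := Function.update (Function.update c (i + (((b+1:ℕ)) : Fin l))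
    (decC m (c (i + (((b+1:ℕ)) : Fin l))))) (i + (((b + (a'+1) + 1 : ℕ)) : Fin l))
    (incC m y) with hc₁
  have hne_s_y : i + (((b+1:ℕ)) : Fin l) ≠ i + (((b + (a'+1) + 1 : ℕ)) : Fin l) :=
    pos_ne_of_ne i (by omega) (by omega) (by omega)
  have hc₁s : c₁ (i + (((b+1:ℕ)) : Fin l)) = m := by
    rw [hc₁, Function.update_of_ne hne_s_y, Function.update_self, hs0]
    unfold decC; simp
  have hc₁y : c₁ (i + (((b + (a'+1) + 1 : ℕ)) : Fin l)) = incC m y := by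
    rw [hc₁, Function.update_self]
  have hc₁o : ∀ v, v ≠ i + (((b+1:ℕ)) : Fin l) →
      v ≠ i + (((b + (a'+1) + 1 : ℕ)) : Fin l) → c₁ v = c v := by
    intro v hv1 hv2
    rw [hc₁, Function.update_of_ne hv2, Function.update_of_ne hv1]
  have hc₁le : ∀ v, c₁ v ≤ m := by
    rw [hc₁]
    exact update2_le hc (decC_le hm (hc _)) (incC_le (hc _))
  have hc₁i : c₁ i = c i := hc₁o i (self_ne_pos i (by omega) (by omega))
    (self_ne_pos i (by omega) (by omega))
  have hasc := reach_ASC hl hm b c₁ i hc₁le (by omega) (by rw [hc₁i]; exact hxm)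
    (by
      intro k hk1 hkb
      rw [hc₁o _ (pos_ne_of_ne i (by omega) (by omega) (by omega))
        (pos_ne_of_ne i (by omega) (by omega) (by omega))]
      exact hw1 k hk1 hkb)
    (by rw [hc₁s]; omega)
  refine reachC_trans hdesc (reachC_trans hasc ?_)
  have hfin : (Function.update (Function.update c₁ i (decC m (c₁ i)))
      (i + (((b + 1 : ℕ)) : Fin l)) (incC m (c₁ (i + (((b + 1 : ℕ)) : Fin l)))))
      = (Function.update (Function.update c i (c i - 1))
        (i + (((b + (a'+1) + 1 : ℕ)) : Fin l)) (y + 1)) := by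
    rw [hc₁s, hc₁i, hdec]
    funext v
    rcases eq_or_ne v (i + (((b + 1 : ℕ)) : Fin l)) with rfl | hvs
    · rw [Function.update_self, Function.update_of_ne hne_s_y,
        Function.update_of_ne (pos_ne i (by omega) (by omega)), hs0]
      unfold incC; simp
    rw [Function.update_of_ne hvs]
    rcases eq_or_ne v (i + (((b + (a'+1) + 1 : ℕ)) : Fin l)) with rfl | hvy
    · rw [Function.update_of_ne (pos_ne i (by omega) (by omega)), hc₁y,
        Function.update_self, hinc]
    rcases eq_or_ne v i with rfl | hvi
    · rw [Function.update_self, Function.update_of_ne hvy, Function.update_self]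
    · rw [Function.update_of_ne hvi, Function.update_of_ne hvy,
        Function.update_of_ne hvi, hc₁o v hvs hvy]
  rw [hfin]
  exact reachC_refl _


/-- Iterated transfer of `t` units across a sorted binary wall. -/
lemma reach_transfer : ∀ (t : ℕ) (c : Fin l → ℕ) (i : Fin l) (b a : ℕ),
    (∀ v, c v ≤ m) → b + a + 1 < l →
    (∀ k, 1 ≤ k → k ≤ b → c (i + ((k : ℕ) : Fin l)) = m) →
    (∀ k, b + 1 ≤ k → k ≤ b + a → c (i + ((k : ℕ) : Fin l)) = 0) →
    t ≤ c i → c i ≠ m → 1 ≤ c (i + (((b + a + 1 : ℕ)) : Fin l)) →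
    c (i + (((b + a + 1 : ℕ)) : Fin l)) + t ≤ m →
    ReachC m l c (Function.update (Function.update c i (c i - t))
      (i + (((b + a + 1 : ℕ)) : Fin l)) (c (i + (((b + a + 1 : ℕ)) : Fin l)) + t)) := by
  intro t
  induction t with
  | zero =>
    intro c i b a hc hd hw1 hw2 ht hxm hy1 hym
    have : (Function.update (Function.update c i (c i - 0))
        (i + (((b + a + 1 : ℕ)) : Fin l)) (c (i + (((b + a + 1 : ℕ)) : Fin l)) + 0)) = c := by
      simp [Function.update_eq_self]
    rw [this]
    exact reachC_refl _
  | succ t IH =>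
    intro c i b a hc hd hw1 hw2 ht hxm hy1 hym
    have hip : i ≠ i + (((b + a + 1 : ℕ)) : Fin l) := self_ne_pos i (by omega) (by omega)
    have hMT := reach_MT hl hm c hc i b a hd (by omega) hxm hw1 hw2 (by omega) (by omega)
    set c₁ := Function.update (Function.update c i (c i - 1))
      (i + (((b + a + 1 : ℕ)) : Fin l)) (c (i + (((b + a + 1 : ℕ)) : Fin l)) + 1) with hc₁
    have hc₁i : c₁ i = c i - 1 := by
      rw [hc₁, Function.update_of_ne hip, Function.update_self]
    have hc₁p : c₁ (i + (((b + a + 1 : ℕ)) : Fin l))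
        = c (i + (((b + a + 1 : ℕ)) : Fin l)) + 1 := by
      rw [hc₁, Function.update_self]
    have hc₁o : ∀ v, v ≠ i → v ≠ i + (((b + a + 1 : ℕ)) : Fin l) → c₁ v = c v := by
      intro v h1 h2
      rw [hc₁, Function.update_of_ne h2, Function.update_of_ne h1]
    have hc₁le : ∀ v, c₁ v ≤ m := by
      rw [hc₁]
      exact update2_le hc (by have := hc i; omega) (by omega)
    have IH' := IH c₁ i b a hc₁le hd
      (by
        intro k h1 h2
        rw [hc₁o _ (pos_ne i (by omega) (by omega)) (pos_ne_of_ne i (by omega) (by omega)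
          (by omega))]
        exact hw1 k h1 h2)
      (by
        intro k h1 h2
        rw [hc₁o _ (pos_ne i (by omega) (by omega)) (pos_ne_of_ne i (by omega) (by omega)
          (by omega))]
        exact hw2 k h1 h2)
      (by rw [hc₁i]; omega) (by rw [hc₁i]; have := hc i; omega)
      (by rw [hc₁p]; omega) (by rw [hc₁p]; omega)
    refine reachC_trans hMT (reachC_trans IH' ?_)
    have hfin : (Function.update (Function.update c₁ i (c₁ i - t))
        (i + (((b + a + 1 : ℕ)) : Fin l)) (c₁ (i + (((b + a + 1 : ℕ)) : Fin l)) + t))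
        = (Function.update (Function.update c i (c i - (t + 1)))
          (i + (((b + a + 1 : ℕ)) : Fin l)) (c (i + (((b + a + 1 : ℕ)) : Fin l)) + (t + 1))) := by
      rw [hc₁i, hc₁p]
      funext v
      rcases eq_or_ne v (i + (((b + a + 1 : ℕ)) : Fin l)) with rfl | hvp
      · rw [Function.update_self, Function.update_self]
        omega
      rw [Function.update_of_ne hvp, Function.update_of_ne hvp]
      rcases eq_or_ne v i with rfl | hvi
      · rw [Function.update_self, Function.update_self]
        omega
      · rw [Function.update_of_ne hvi, Function.update_of_ne hvi, hc₁o v hvi hvp]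
    rw [hfin]
    exact reachC_refl _

/-- Bubble an `m` leftwards across a run of `r` zeros. -/
lemma reach_bubble : ∀ (r : ℕ) (c : Fin l → ℕ) (s : Fin l), (∀ v, c v ≤ m) → r + 1 < l →
    (∀ k, 1 ≤ k → k ≤ r → c (s + ((k : ℕ) : Fin l)) = 0) →
    c (s + (((r + 1 : ℕ)) : Fin l)) = m →
    ∃ c', ReachC m l c c' ∧ c' (s + (((1 : ℕ)) : Fin l)) = m ∧
      (∀ k, 2 ≤ k → k ≤ r + 1 → c' (s + ((k : ℕ) : Fin l)) = 0) ∧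
      (∀ v, (∀ k, 1 ≤ k → k ≤ r + 1 → v ≠ s + ((k : ℕ) : Fin l)) → c' v = c v) ∧
      (∀ v, c' v ≤ m) ∧ (∑ v, c' v = ∑ v, c v) := by
  intro r
  induction r with
  | zero =>
    intro c s hc hr hz hm1
    exact ⟨c, reachC_refl _, hm1, fun k h2 h1 => by omega, fun v _ => rfl, hc, rfl⟩
  | succ r IH =>
    intro c s hc hr hz hm1
    have h0 : c (s + (((r + 1 : ℕ)) : Fin l)) = 0 := hz (r+1) (by omega) le_rfl
    have hj : (s + (((r + 2 : ℕ)) : Fin l)) - 1 = s + (((r + 1 : ℕ)) : Fin l) :=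
      pos_sub_one hl s (r + 1)
    have step1 : ReachC m l c (moveC m c (s + (((r + 2 : ℕ)) : Fin l))) :=
      reach_move hl hm hc _ (by rw [hj, h0]; omega) (by rw [hm1]; omega)
    set c₁ := moveC m c (s + (((r + 2 : ℕ)) : Fin l)) with hc₁
    have hne12 : s + (((r+1:ℕ)) : Fin l) ≠ s + (((r+2:ℕ)) : Fin l) :=
      pos_ne_of_ne s (by omega) (by omega) (by omega)
    have hc₁r1 : c₁ (s + (((r+1:ℕ)) : Fin l)) = m := by
      rw [hc₁]; unfold moveC; rw [hj]
      rw [Function.update_of_ne hne12, Function.update_self, h0]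
      unfold decC; simp
    have hc₁r2 : c₁ (s + (((r+2:ℕ)) : Fin l)) = 0 := by
      rw [hc₁]; unfold moveC
      rw [Function.update_self, hm1]
      unfold incC; simp
    have hc₁o : ∀ v, v ≠ s + (((r+1:ℕ)) : Fin l) → v ≠ s + (((r+2:ℕ)) : Fin l) →
        c₁ v = c v := by
      intro v h1 h2
      rw [hc₁]; unfold moveC; rw [hj]
      rw [Function.update_of_ne h2, Function.update_of_ne h1]
    have hc₁le : ∀ v, c₁ v ≤ m := by rw [hc₁]; exact moveC_le hl hm hc _
    have hc₁sum : ∑ v, c₁ v = ∑ v, c v := by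
      have := sum_update2 (c := c) hne12 (decC m (c (s + (((r+1:ℕ)) : Fin l))))
        (incC m (c (s + (((r+2:ℕ)) : Fin l))))
      rw [h0] at this
      have hd0 : decC m 0 = m := by unfold decC; simp
      have him : incC m (c (s + (((r+2:ℕ)) : Fin l))) = 0 := by
        rw [hm1]; unfold incC; simp
      rw [hd0, him] at this
      have hcexp : c₁ = Function.update (Function.update c (s + (((r+1:ℕ)) : Fin l)) m)
          (s + (((r+2:ℕ)) : Fin l)) 0 := by
        rw [hc₁]; unfold moveC; rw [hj, h0, hm1]
        unfold decC incC; simp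
      rw [hm1] at this
      rw [hcexp]
      omega
    obtain ⟨c'', hreach, hm1', hz', ho', hle', hsum'⟩ := IH c₁ s hc₁le (by omega)
      (by
        intro k h1 h2
        rw [hc₁o _ (pos_ne_of_ne s (by omega) (by omega) (by omega))
          (pos_ne_of_ne s (by omega) (by omega) (by omega))]
        exact hz k h1 (by omega))
      hc₁r1
    refine ⟨c'', reachC_trans step1 hreach, hm1', ?_, ?_, hle', by rw [hsum', hc₁sum]⟩
    · intro k h2 h1
      rcases Nat.lt_or_ge k (r + 2) with hk | hk
      · exact hz' k h2 (by omega)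
      · have hk2 : k = r + 2 := by omega
        subst hk2
        rw [ho' _ (fun k' h1' h2' => pos_ne_of_ne s (by omega) (by omega) (by omega))]
        exact hc₁r2
    · intro v hv
      rw [ho' v (fun k h1 h2 => hv k h1 (by omega))]
      exact hc₁o v (hv (r+1) (by omega) (by omega)) (hv (r+2) (by omega) (by omega))

/-- Sort a binary segment into `m`s followed by `0`s. -/
lemma reach_sort : ∀ (n : ℕ) (c : Fin l → ℕ) (s : Fin l), (∀ v, c v ≤ m) → n < l →
    (∀ k, 1 ≤ k → k ≤ n → c (s + ((k : ℕ) : Fin l)) = 0 ∨ c (s + ((k : ℕ) : Fin l)) = m) →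
    ∃ c' b, ReachC m l c c' ∧ b ≤ n ∧
      (∀ k, 1 ≤ k → k ≤ b → c' (s + ((k : ℕ) : Fin l)) = m) ∧
      (∀ k, b + 1 ≤ k → k ≤ n → c' (s + ((k : ℕ) : Fin l)) = 0) ∧
      (∀ v, (∀ k, 1 ≤ k → k ≤ n → v ≠ s + ((k : ℕ) : Fin l)) → c' v = c v) ∧
      (∀ v, c' v ≤ m) ∧ (∑ v, c' v = ∑ v, c v) := by
  intro n
  induction n with
  | zero =>
    intro c s hc hn hbin
    exact ⟨c, 0, reachC_refl _, le_rfl, fun k h1 h2 => by omega, fun k h1 h2 => by omega,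
      fun v _ => rfl, hc, rfl⟩
  | succ n IH =>
    intro c s hc hn hbin
    obtain ⟨c₁, b, hreach, hbn, hms, hzs, ho, hle, hsum⟩ := IH c s hc (by omega)
      (fun k h1 h2 => hbin k h1 (by omega))
    have hlast : c₁ (s + (((n+1:ℕ)) : Fin l)) = c (s + (((n+1:ℕ)) : Fin l)) :=
      ho _ (fun k h1 h2 => pos_ne_of_ne s (by omega) (by omega) (by omega))
    rcases hbin (n+1) (by omega) le_rfl with h0 | hmm
    · exact ⟨c₁, b, hreach, by omega, hms,
        (by
          intro k h1 h2
          rcases Nat.lt_or_ge k (n+1) with hk | hk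
          · exact hzs k h1 (by omega)
          · have : k = n + 1 := by omega
            subst this
            rw [hlast]; exact h0),
        (fun v hv => ho v (fun k h1 h2 => hv k h1 (by omega))), hle, hsum⟩
    · -- bubble the m at position n+1 down to position b+1
      obtain ⟨c₂, hreach2, hm1, hz2, ho2, hle2, hsum2⟩ := reach_bubble hl hm (n - b) c₁
        (s + ((b : ℕ) : Fin l)) hle (by omega)
        (by
          intro k h1 h2
          rw [pos_add_cast]
          exact hzs (b + k) (by omega) (by omega))
        (by
          rw [pos_add_cast, show b + (n - b + 1) = n + 1 from by omega, hlast]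
          exact hmm)
      rw [pos_add_cast, show b + 1 = b + 1 from rfl] at hm1
      refine ⟨c₂, b + 1, reachC_trans hreach hreach2, by omega, ?_, ?_, ?_, hle2,
        by rw [hsum2, hsum]⟩
      · intro k h1 h2
        rcases Nat.lt_or_ge k (b+1) with hk | hk
        · rw [ho2 _ (fun k' h1' h2' => by
            rw [pos_add_cast]
            exact pos_ne_of_ne s (by omega) (by omega) (by omega))]
          exact hms k h1 (by omega)
        · have : k = b + 1 := by omega
          subst this
          exact hm1
      · intro k h1 h2
        have := hz2 (k - b) (by omega) (by omega)
        rw [pos_add_cast, show b + (k - b) = k from by omega] at this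
        exact this
      · intro v hv
        rw [ho2 v (fun k h1 h2 => by
          rw [pos_add_cast]
          exact hv (b + k) (by omega) (by omega))]
        exact ho v (fun k h1 h2 => hv k h1 (by omega))


omit hl hm in
lemma pos_cover (i v : Fin l) : v = i + ((((v - i : Fin l) : ℕ)) : Fin l) := by
  rw [Fin.cast_val_eq_self, add_comm, sub_add_cancel]

/-- If the sum is divisible by `m` and some pile is fractional, there is another one. -/
lemma fract_two {c : Fin l → ℕ} (hc : ∀ v, c v ≤ m)
    (hdvd : m ∣ ∑ v, c v) {i : Fin l} (hi0 : c i ≠ 0) (him : c i ≠ m) :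
    ∃ v, v ≠ i ∧ c v ≠ 0 ∧ c v ≠ m := by
  by_contra hno
  push_neg at hno
  have hdvd2 : m ∣ ∑ v ∈ Finset.univ.erase i, c v := by
    apply Finset.dvd_sum
    intro v hv
    rcases eq_or_ne (c v) 0 with h | h
    · simp [h]
    · rw [hno v (Finset.mem_erase.1 hv).1 h]
  have hsplit : c i + ∑ v ∈ Finset.univ.erase i, c v = ∑ v, c v :=
    Finset.add_sum_erase _ c (Finset.mem_univ i)
  have : m ∣ c i := by
    rw [← hsplit, add_comm] at hdvd
    exact (Nat.dvd_add_right hdvd2).1 hdvd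
  have := Nat.le_of_dvd (by omega) this
  have := hc i
  omega

/-- Phase 1: make all piles binary. -/
lemma reach_phase1 : ∀ (N : ℕ) (c : Fin l → ℕ), (∀ v, c v ≤ m) → m ∣ (∑ v, c v) →
    (Finset.univ.filter fun v => c v ≠ 0 ∧ c v ≠ m).card ≤ N →
    ∃ c', ReachC m l c c' ∧ (∀ v, c' v ≤ m) ∧ (∑ v, c' v = ∑ v, c v) ∧
      (∀ v, c' v = 0 ∨ c' v = m) := by
  intro N
  induction N with
  | zero =>
    intro c hc hdvd hcard
    refine ⟨c, reachC_refl _, hc, rfl, fun v => ?_⟩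
    by_contra hv
    push_neg at hv
    have : v ∈ Finset.univ.filter fun v => c v ≠ 0 ∧ c v ≠ m :=
      Finset.mem_filter.2 ⟨Finset.mem_univ v, hv⟩
    have := Finset.card_pos.2 ⟨v, this⟩
    omega
  | succ N IH =>
    intro c hc hdvd hcard
    by_cases hall : ∀ v, c v = 0 ∨ c v = m
    · exact ⟨c, reachC_refl _, hc, rfl, hall⟩
    push_neg at hall
    obtain ⟨i, hi0, him⟩ := hall
    obtain ⟨v₁, hv₁i, hv₁0, hv₁m⟩ := fract_two hl hm hc hdvd hi0 him
    -- the least positive distance to another fractional pile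
    have hex : ∃ d, 0 < d ∧ d < l ∧ c (i + ((d : ℕ) : Fin l)) ≠ 0 ∧
        c (i + ((d : ℕ) : Fin l)) ≠ m := by
      refine ⟨((v₁ - i : Fin l) : ℕ), ?_, (v₁ - i).isLt, ?_, ?_⟩
      · have : (v₁ - i : Fin l) ≠ 0 := fun hh => hv₁i (by
          have := congrArg (· + i) hh
          simpa [sub_add_cancel] using this)
        have : ((v₁ - i : Fin l) : ℕ) ≠ 0 := fun hh => this (Fin.ext hh)
        omega
      · rw [← pos_cover]; exact hv₁0
      · rw [← pos_cover]; exact hv₁m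
    classical
    obtain ⟨d, ⟨hd0, hdl, hdf0, hdfm⟩, hdleast⟩ :
        ∃ d, (0 < d ∧ d < l ∧ c (i + ((d : ℕ) : Fin l)) ≠ 0 ∧ c (i + ((d : ℕ) : Fin l)) ≠ m) ∧
          ∀ e, e < d → ¬ (0 < e ∧ e < l ∧ c (i + ((e : ℕ) : Fin l)) ≠ 0 ∧
            c (i + ((e : ℕ) : Fin l)) ≠ m) :=
      ⟨Nat.find hex, Nat.find_spec hex, fun e he => Nat.find_min hex he⟩
    have hmin : ∀ e, 0 < e → e < d → c (i + ((e : ℕ) : Fin l)) = 0 ∨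
        c (i + ((e : ℕ) : Fin l)) = m := by
      intro e he0 hed
      have hnm := hdleast e hed
      push_neg at hnm
      by_cases h0 : c (i + ((e : ℕ) : Fin l)) = 0
      · exact Or.inl h0
      · exact Or.inr (hnm he0 (by omega) h0)
    -- sort the wall between i and i + d
    obtain ⟨c₁, b, hreach1, hbd, hms, hzs, ho1, hle1, hsum1⟩ := reach_sort hl hm (d-1) c i hc
      (by omega) (fun k h1 h2 => hmin k (by omega) (by omega))
    have hc₁i : c₁ i = c i := ho1 i (fun k h1 h2 => self_ne_pos i (by omega) (by omega))
    have hc₁d : c₁ (i + ((d : ℕ) : Fin l)) = c (i + ((d : ℕ) : Fin l)) :=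
      ho1 _ (fun k h1 h2 => pos_ne_of_ne i (by omega) (by omega) (by omega))
    have hd' : b + (d - 1 - b) + 1 = d := by omega
    set t := min (c₁ i) (m - c₁ (i + ((d : ℕ) : Fin l))) with hht
    have hmin1 : t ≤ c₁ i := min_le_left _ _
    have hmin2 : t ≤ m - c₁ (i + ((d : ℕ) : Fin l)) := min_le_right _ _
    have htrans := reach_transfer hl hm t c₁ i b (d-1-b) hle1 (by omega)
      hms (fun k h1 h2 => hzs k h1 (by omega))
      hmin1 (by rw [hc₁i]; exact him)
      (by rw [hd', hc₁d]; omega)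
      (by
        rw [hd', hc₁d]
        rw [hc₁d] at hmin2
        have h9 := hle1 (i + ((d:ℕ) : Fin l))
        rw [hc₁d] at h9
        omega)
    rw [hd'] at htrans
    set c₂ := Function.update (Function.update c₁ i (c₁ i - t)) (i + ((d : ℕ) : Fin l))
      (c₁ (i + ((d : ℕ) : Fin l)) + t) with hc₂
    have hip : i ≠ i + ((d : ℕ) : Fin l) := self_ne_pos i (by omega) (by omega)
    have hc₂i : c₂ i = c₁ i - t := by
      rw [hc₂, Function.update_of_ne hip, Function.update_self]
    have hc₂d : c₂ (i + ((d : ℕ) : Fin l)) = c₁ (i + ((d : ℕ) : Fin l)) + t := by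
      rw [hc₂, Function.update_self]
    have hc₂o : ∀ v, v ≠ i → v ≠ i + ((d : ℕ) : Fin l) → c₂ v = c₁ v := by
      intro v h1 h2
      rw [hc₂, Function.update_of_ne h2, Function.update_of_ne h1]
    have hydm : c₁ (i + ((d : ℕ) : Fin l)) + t ≤ m := by
      have := hle1 (i + ((d:ℕ) : Fin l)); omega
    have hc₂le : ∀ v, c₂ v ≤ m := by
      rw [hc₂]
      exact update2_le hle1 (by have := hle1 i; omega) hydm
    have hc₂sum : ∑ v, c₂ v = ∑ v, c v := by
      have := sum_update2 (c := c₁) hip (c₁ i - t) (c₁ (i + ((d : ℕ) : Fin l)) + t)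
      rw [← hc₂] at this
      omega
    -- the fractional count strictly decreases
    have hfe : (Finset.univ.filter fun v => c₁ v ≠ 0 ∧ c₁ v ≠ m)
        = (Finset.univ.filter fun v => c v ≠ 0 ∧ c v ≠ m) := by
      apply Finset.filter_congr
      intro v _
      have hv := pos_cover i v
      set e := (((v - i : Fin l)) : ℕ) with he
      by_cases hwall : 1 ≤ e ∧ e ≤ d - 1
      · have hbin : c v = 0 ∨ c v = m := by rw [hv]; exact hmin e (by omega) (by omega)
        have hbin1 : c₁ v = 0 ∨ c₁ v = m := by
          rw [hv]
          rcases Nat.lt_or_ge b e with hh | hh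
          · exact Or.inl (hzs e (by omega) (by omega))
          · exact Or.inr (hms e (by omega) hh)
        constructor
        · intro hcon; rcases hbin1 with h | h <;> simp [h] at hcon <;> tauto
        · intro hcon; rcases hbin with h | h <;> simp [h] at hcon <;> tauto
      · have : c₁ v = c v := by
          apply ho1
          intro k h1 h2 hvk
          rw [hv] at hvk
          have := (pos_eq_iff i (by omega : e < l) (by omega : k < l)).1 hvk
          omega
        rw [this]
    have hsub : (Finset.univ.filter fun v => c₂ v ≠ 0 ∧ c₂ v ≠ m)
        ⊆ (Finset.univ.filter fun v => c₁ v ≠ 0 ∧ c₁ v ≠ m) := by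
      intro v hv
      rw [Finset.mem_filter] at hv ⊢
      refine ⟨Finset.mem_univ v, ?_⟩
      rcases eq_or_ne v i with rfl | hvi
      · rw [hc₁i]; exact ⟨hi0, him⟩
      rcases eq_or_ne v (i + ((d : ℕ) : Fin l)) with rfl | hvd
      · rw [hc₁d]; exact ⟨hdf0, hdfm⟩
      · rw [← hc₂o v hvi hvd]; exact hv.2
    have hstrict : ∃ w, w ∈ (Finset.univ.filter fun v => c₁ v ≠ 0 ∧ c₁ v ≠ m) ∧
        w ∉ (Finset.univ.filter fun v => c₂ v ≠ 0 ∧ c₂ v ≠ m) := by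
      rcases Nat.le_total (c₁ i) (m - c₁ (i + ((d : ℕ) : Fin l))) with hcase | hcase
      · refine ⟨i, Finset.mem_filter.2 ⟨Finset.mem_univ _, by rw [hc₁i]; exact ⟨hi0, him⟩⟩, ?_⟩
        rw [Finset.mem_filter]
        have : c₂ i = 0 := by rw [hc₂i]; omega
        simp [this]
      · refine ⟨i + ((d : ℕ) : Fin l), Finset.mem_filter.2 ⟨Finset.mem_univ _,
          by rw [hc₁d]; exact ⟨hdf0, hdfm⟩⟩, ?_⟩
        rw [Finset.mem_filter]
        have hydle : c₁ (i + ((d : ℕ) : Fin l)) ≤ m := hle1 _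
        have : c₂ (i + ((d : ℕ) : Fin l)) = m := by rw [hc₂d]; omega
        simp [this]
    obtain ⟨w, hw1, hw2⟩ := hstrict
    have hcard2 : (Finset.univ.filter fun v => c₂ v ≠ 0 ∧ c₂ v ≠ m).card ≤ N := by
      have hss : (Finset.univ.filter fun v => c₂ v ≠ 0 ∧ c₂ v ≠ m)
          ⊂ (Finset.univ.filter fun v => c₁ v ≠ 0 ∧ c₁ v ≠ m) :=
        Finset.ssubset_iff_of_subset hsub |>.2 ⟨w, hw1, hw2⟩
      have := Finset.card_lt_card hss
      rw [hfe] at this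
      omega
    obtain ⟨c₃, hreach3, hle3, hsum3, hbin3⟩ := IH c₂ hc₂le (by rw [hc₂sum]; exact hdvd) hcard2
    exact ⟨c₃, reachC_trans hreach1 (reachC_trans htrans hreach3), hle3,
      by rw [hsum3, hc₂sum], hbin3⟩


/-- Phase 2: a binary configuration with sum `h*m` reaches a rotated block form. -/
lemma reach_phase2 (h : ℕ) (hpos : 0 < h) (hlt : h < l) (c : Fin l → ℕ)
    (hc : ∀ v, c v ≤ m) (hsum : ∑ v, c v = h * m) (hbin : ∀ v, c v = 0 ∨ c v = m) :
    ∃ (z : Fin l) (c' : Fin l → ℕ), ReachC m l c c' ∧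
      (∀ k, 1 ≤ k → k ≤ h → c' (z + ((k : ℕ) : Fin l)) = m) ∧
      (∀ k, k ≤ l - 1 → (k = 0 ∨ h + 1 ≤ k) → c' (z + ((k : ℕ) : Fin l)) = 0) := by
  -- find a zero pile
  have hz : ∃ z, c z = 0 := by
    by_contra hno
    push_neg at hno
    have hallm : ∀ v, c v = m := fun v => (hbin v).resolve_left (hno v)
    have : ∑ v, c v = l * m := by
      rw [Finset.sum_congr rfl (fun v _ => hallm v)]
      simp [Finset.card_univ, mul_comm]
    rw [hsum] at this
    have := Nat.eq_of_mul_eq_mul_right (by omega : 0 < m) this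
    omega
  obtain ⟨z, hz0⟩ := hz
  obtain ⟨c₁, b, hreach1, hbd, hms, hzs, ho1, hle1, hsum1⟩ := reach_sort hl hm (l-1) c z hc
    (by omega) (fun k h1 h2 => hbin _)
  have hc₁z : c₁ z = 0 := by
    rw [ho1 z (fun k h1 h2 => self_ne_pos z (by omega) (by omega))]
    exact hz0
  -- compute the sum of c₁ to identify b with h
  have hsum2 : ∑ v, c₁ v = h * m := by rw [hsum1, hsum]
  have hsum3 : ∑ v, c₁ v = ∑ k ∈ Finset.range l, c₁ (z + ((k : ℕ) : Fin l)) := by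
    rw [← Fin.sum_univ_eq_sum_range (fun k => c₁ (z + ((k : ℕ) : Fin l))) l]
    rw [show (∑ i : Fin l, c₁ (z + (((i : ℕ) : ℕ) : Fin l)))
        = ∑ i : Fin l, c₁ (z + i) from
      Finset.sum_congr rfl (fun i _ => by rw [Fin.cast_val_eq_self])]
    exact (Equiv.sum_comp (Equiv.addLeft z) c₁).symm
  have hsum4 : ∑ k ∈ Finset.range l, c₁ (z + ((k : ℕ) : Fin l)) = b * m := by
    rw [Finset.sum_congr rfl (fun k hk => show c₁ (z + ((k : ℕ) : Fin l))
        = if 1 ≤ k ∧ k ≤ b then m else 0 from by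
      rcases Nat.eq_zero_or_pos k with rfl | hk0
      · rw [if_neg (by omega)]
        simpa using hc₁z
      · rw [Finset.mem_range] at hk
        by_cases hkb : k ≤ b
        · rw [if_pos ⟨hk0, hkb⟩]; exact hms k hk0 hkb
        · rw [if_neg (by omega)]; exact hzs k (by omega) (by omega))]
    rw [Finset.sum_ite, Finset.sum_const, Finset.sum_const_zero, add_zero]
    have : (Finset.range l).filter (fun k => 1 ≤ k ∧ k ≤ b) = Finset.Ico 1 (b+1) := by
      ext k
      simp only [Finset.mem_filter, Finset.mem_range, Finset.mem_Ico]
      omega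
    rw [this, Nat.card_Ico]
    simp [smul_eq_mul]
  have hbh : b = h := Nat.eq_of_mul_eq_mul_right (by omega : 0 < m)
    (by rw [← hsum4, ← hsum3, hsum2])
  subst hbh
  refine ⟨z, c₁, hreach1, hms, ?_⟩
  intro k hkl hk
  rcases hk with rfl | hk
  · simpa using hc₁z
  · exact hzs k hk hkl

end Runs

section Final

variable [NeZero l]

lemma cast_mod (x : ℕ) : (((x % l : ℕ)) : Fin l) = ((x : ℕ) : Fin l) := by
  apply Fin.ext
  simp [Fin.val_natCast, Nat.mod_mod]

lemma mod_eval {x : ℕ} (hl0 : 0 < l) (hx : x < 2 * l) :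
    x % l = if x < l then x else x - l := by
  split
  · exact Nat.mod_eq_of_lt (by omega)
  · rw [Nat.mod_eq_sub_mod (by omega)]
    exact Nat.mod_eq_of_lt (by omega)

end Final



end MacroLayer



end Stmt1Aux

open Fin.NatCast Fin.CommRing

/-- any quiver consisting of a single `(l,h)`-central cycle is
mutation-equivalent to `Ã_{l-h,h}`. -/
theorem stmt1 (m l h : ℕ) (hm : 1 ≤ m) (hl : 3 ≤ l) (hpos : 0 < h) (hlt : h < l)
    (c : Fin l → ℕ) (hc : ∀ i, c i ≤ m) (hsum : ∑ i, c i = h * m) :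
    ∃ Q' : CQ (Fin l), IsTildeA m (l - h) h Q' ∧ MutEquiv m (cycleQuiver m l c) Q' := by
  haveI : NeZero l := ⟨by omega⟩
  obtain ⟨c₁, hr1, hle1, hsum1, hbin1⟩ := reach_phase1 hl hm
    ((Finset.univ.filter fun v => c v ≠ 0 ∧ c v ≠ m).card) c hc
    ⟨h, by rw [hsum]; ring⟩ le_rfl
  obtain ⟨z, c₂, hr2, hms, hzs⟩ := reach_phase2 hl hm h hpos hlt c₁ hle1
    (by rw [hsum1, hsum]) hbin1
  haveI hpne : NeZero (l - h + h) := ⟨by omega⟩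
  have hpl : l - h + h = l := by omega
  -- the rotation equivalence
  set f : Fin (l - h + h) → Fin l :=
    fun i => z + ((((i : ℕ) + h + 1 : ℕ)) : Fin l) with hf
  have hinj : Function.Injective f := by
    intro i j hij
    have hcast : (((((i : ℕ)) + h + 1 : ℕ)) : Fin l) = (((((j : ℕ)) + h + 1 : ℕ)) : Fin l) :=
      add_left_cancel hij
    have hval := congrArg Fin.val hcast
    rw [Fin.val_natCast, Fin.val_natCast] at hval
    have hi := i.isLt
    have hj := j.isLt
    rw [mod_eval (by omega) (by omega), mod_eval (by omega) (by omega)] at hval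
    apply Fin.ext
    split_ifs at hval <;> omega
  have hbij : Function.Bijective f :=
    (Fintype.bijective_iff_injective_and_card f).2 ⟨hinj, by simp [hpl]⟩
  set e : Fin (l - h + h) ≃ Fin l := Equiv.ofBijective f hbij with he
  have hef : ∀ i, e i = f i := fun i => rfl
  -- colors under the rotation
  have hcol : ∀ i : Fin (l - h + h), c₂ (f i) = (if (i : ℕ) < l - h then 0 else m) := by
    intro i
    have hi := i.isLt
    have hk : c₂ (f i) = c₂ (z + (((((i : ℕ) + h + 1) % l : ℕ)) : Fin l)) := by
      rw [hf, cast_mod]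
    by_cases hip : (i : ℕ) < l - h
    · rw [if_pos hip, hk]
      rcases Nat.lt_or_ge ((i : ℕ) + h + 1) l with hcase | hcase
      · rw [mod_eval (by omega) (by omega), if_pos hcase]
        exact hzs _ (by omega) (Or.inr (by omega))
      · have hexact : (i : ℕ) + h + 1 = l := by omega
        rw [mod_eval (by omega) (by omega), if_neg (by omega), hexact, Nat.sub_self]
        exact hzs 0 (by omega) (Or.inl rfl)
    · rw [if_neg hip, hk, mod_eval (by omega) (by omega), if_neg (by omega)]
      exact hms _ (by omega) (by omega)
  -- commutation with the cyclic successor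
  have hcomm : ∀ i : Fin (l - h + h), f (fsucc i) = fsucc (f i) := by
    intro i
    have hsv : ((fsucc i : Fin (l - h + h)) : ℕ) = ((i : ℕ) + 1) % l := by
      show (((i : ℕ) + 1) % (l - h + h)) = ((i : ℕ) + 1) % l
      exact congrArg (((i : ℕ) + 1) % ·) hpl
    rw [hf]
    simp only [hsv]
    rw [fsucc_eq (by omega : 1 < l) (z + ((((i : ℕ) + h + 1 : ℕ)) : Fin l))]
    rw [pos_add_cast]
    congr 1
    calc (((((i : ℕ) + 1) % l + h + 1 : ℕ)) : Fin l)
        = ((((((i : ℕ) + 1) % l : ℕ)) : Fin l)) + (((h + 1 : ℕ)) : Fin l) := by push_cast; ring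
      _ = (((((i : ℕ) + 1 : ℕ)) : Fin l)) + (((h + 1 : ℕ)) : Fin l) := by rw [cast_mod]
      _ = ((((i : ℕ) + h + 1 + 1 : ℕ)) : Fin l) := by push_cast; ring
  have hcomm' : ∀ i : Fin (l - h + h), e (fsucc i) = fsucc (e i) := by
    intro i; rw [hef, hef, hcomm]
  refine ⟨cycleQuiver m l c₂, ⟨e, ?_⟩, reachC_trans hr1 hr2⟩
  intro i j t
  show cycleQuiver m l c₂ (e i) (e j) t
      = cycleQuiver m (l - h + h) (fun i => if (i : ℕ) < l - h then 0 else m) i j t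
  have h3' : 3 ≤ l - h + h := by omega
  by_cases h1 : j = fsucc i
  · have h1' : e j = fsucc (e i) := by rw [h1, hcomm']
    rw [cq_of_succ hl h1' c₂ t, cq_of_succ h3' h1 _ t, hef, hcol]
  by_cases h2 : i = fsucc j
  · have h2' : e i = fsucc (e j) := by rw [h2, hcomm']
    rw [cq_of_pred hl h2' c₂ t, cq_of_pred h3' h2 _ t, hef, hcol]
  · have h1' : ¬ e j = fsucc (e i) := fun hcon => h1 (e.injective (by rw [hcomm']; exact hcon))
    have h2' : ¬ e i = fsucc (e j) := fun hcon => h2 (e.injective (by rw [hcomm']; exact hcon))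
    rw [cq_of_far h1' h2' c₂ t, cq_of_far h1 h2 _ t]

end CM
end

section
/- Let Q ∈ Q^m_{p,q}, let w be a peripheral vertex of Q with associated quiver Q_w ∈ Q^m_{n_w}, and let D be the boundary subquiver of Q containing w. If Q_w is not a quiver of type A_{n_w} (where n_w = |(Q_w)₀|), then there exists a clique C of Q_w that is almost extremal in the subquiver Q_w ∪ D of Q, and therefore almost extremal in Q. -/
open Finset

open scoped Classical

namespace CM

variable {V : Type*}

/-! ### Auxiliary graph-theoretic layer -/

namespace Aux

variable {W : Type*}

/-- The subgraph of `G` induced (as a graph on `W`) by a finset `s`. -/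
def gs (G : SimpleGraph W) (s : Finset W) : SimpleGraph W where
  Adj u v := G.Adj u v ∧ u ∈ s ∧ v ∈ s
  symm := ⟨fun _ _ h => ⟨h.1.symm, h.2.2, h.2.1⟩⟩
  loopless := ⟨fun u h => G.loopless.irrefl u h.1⟩

lemma gs_adj {G : SimpleGraph W} {s : Finset W} {u v : W} :
    (gs G s).Adj u v ↔ G.Adj u v ∧ u ∈ s ∧ v ∈ s := Iff.rfl

/-- `gs G s` with all edges inside `K` deleted. -/
def delk (G : SimpleGraph W) (s K : Finset W) : SimpleGraph W where
  Adj u v := (gs G s).Adj u v ∧ ¬ (u ∈ K ∧ v ∈ K)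
  symm := ⟨fun _ _ h => ⟨(gs _ _).symm.symm _ _ h.1, fun hc => h.2 ⟨hc.2, hc.1⟩⟩⟩
  loopless := ⟨fun u h => (gs _ _).loopless.irrefl u h.1⟩

lemma delk_adj {G : SimpleGraph W} {s K : Finset W} {u v : W} :
    (delk G s K).Adj u v ↔ (gs G s).Adj u v ∧ ¬ (u ∈ K ∧ v ∈ K) := Iff.rfl

/-- Reachability via explicit chains. -/
def reach (A : SimpleGraph W) (x y : W) : Prop :=
  ∃ n : ℕ, ∃ f : ℕ → W, f 0 = x ∧ f n = y ∧ ∀ i, i < n → A.Adj (f i) (f (i + 1))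

lemma reach_refl (A : SimpleGraph W) (x : W) : reach A x x :=
  ⟨0, fun _ => x, rfl, rfl, fun i hi => absurd hi (by omega)⟩

lemma adj_reach {A : SimpleGraph W} {x y : W} (h : A.Adj x y) : reach A x y := by
  refine ⟨1, fun i => if i = 0 then x else y, by simp, by simp, ?_⟩
  intro i hi
  have hi0 : i = 0 := by omega
  subst hi0
  simpa using h

lemma reach_trans {A : SimpleGraph W} {x y z : W} :
    reach A x y → reach A y z → reach A x z := by
  rintro ⟨n, f, hf0, hfn, hf⟩ ⟨k, g, hg0, hgk, hg⟩
  refine ⟨n + k, fun i => if i ≤ n then f i else g (i - n), by simp [hf0], ?_, ?_⟩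
  · by_cases h : n + k ≤ n
    · have hk0 : k = 0 := by omega
      subst hk0
      show (if n + 0 ≤ n then f (n + 0) else g (n + 0 - n)) = z
      rw [if_pos h, Nat.add_zero, hfn, ← hg0]
      exact hgk
    · show (if n + k ≤ n then f (n + k) else g (n + k - n)) = z
      rw [if_neg h, show n + k - n = k by omega]
      exact hgk
  · intro i hi
    by_cases h1 : i + 1 ≤ n
    · have h0 : i ≤ n := by omega
      simp only [h0, h1, if_true]
      exact hf i (by omega)
    · by_cases h0 : i ≤ n
      · have hin : i = n := by omega
        have hk : 0 < k := by omega
        have he : A.Adj (g 0) (g 1) := hg 0 hk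
        rw [hg0, ← hfn] at he
        simp only [h0, h1, if_false, if_true]
        have : i + 1 - n = 1 := by omega
        rw [this, hin]
        exact he
      · simp only [h0, h1, if_false]
        have h2 : i + 1 - n = (i - n) + 1 := by omega
        rw [h2]
        exact hg (i - n) (by omega)

lemma reach_symm {A : SimpleGraph W} {x y : W} : reach A x y → reach A y x := by
  rintro ⟨n, f, hf0, hfn, hf⟩
  refine ⟨n, fun i => f (n - i), by simp only [Nat.sub_zero]; exact hfn,
    by simp only [Nat.sub_self]; exact hf0, ?_⟩
  intro i hi
  have h1 : n - i = (n - (i + 1)) + 1 := by omega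
  show A.Adj (f (n - i)) (f (n - (i + 1)))
  rw [h1]
  exact (hf (n - (i + 1)) (by omega)).symm

lemma reach_mono {A B : SimpleGraph W} (h : ∀ u v, A.Adj u v → B.Adj u v) {x y : W} :
    reach A x y → reach B x y := by
  rintro ⟨n, f, h0, h1, h2⟩
  exact ⟨n, f, h0, h1, fun i hi => h _ _ (h2 i hi)⟩

lemma reach_closed {A : SimpleGraph W} {P : Set W}
    (hP : ∀ x ∈ P, ∀ y, A.Adj x y → y ∈ P)
    {x y : W} (hx : x ∈ P) (h : reach A x y) : y ∈ P := by
  obtain ⟨n, f, hf0, hfn, hf⟩ := h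
  have key : ∀ i, i ≤ n → f i ∈ P := by
    intro i
    induction i with
    | zero => intro _; rwa [hf0]
    | succ k ih => intro hk; exact hP _ (ih (by omega)) _ (hf k (by omega))
  rw [← hfn]; exact key n le_rfl

lemma reachable_reach {A : SimpleGraph W} {x y : W} (h : A.Reachable x y) : reach A x y := by
  obtain ⟨p⟩ := h
  induction p with
  | nil => exact reach_refl _ _
  | cons hadj _ ih => exact reach_trans (adj_reach hadj) ih

lemma reach_reachable {A : SimpleGraph W} {x y : W} (h : reach A x y) : A.Reachable x y := by
  obtain ⟨n, f, h0, h1, he⟩ := h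
  have key : ∀ i, i ≤ n → A.Reachable (f 0) (f i) := by
    intro i
    induction i with
    | zero => intro _; exact SimpleGraph.Reachable.refl _
    | succ k ih => intro hk; exact (ih (by omega)).trans (he k (by omega)).reachable
  rw [← h0, ← h1]; exact key n le_rfl

lemma gs_mem_right {G : SimpleGraph W} {s : Finset W} {x y : W}
    (h : reach (gs G s) x y) (hx : x ∈ s) : y ∈ s :=
  reach_closed (P := {u | u ∈ s}) (fun _ _ z hz => (gs_adj.mp hz).2.2) hx h

/-- Component of `v` after deleting the edges of `K` inside `s`. -/
def hset (G : SimpleGraph W) (s K : Finset W) (v : W) : Set W :=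
  {u | reach (delk G s K) v u}

lemma hset_self {G : SimpleGraph W} {s K : Finset W} (v : W) : v ∈ hset G s K v :=
  reach_refl _ _

lemma hset_closed {G : SimpleGraph W} {s K : Finset W} {v u z : W}
    (hu : u ∈ hset G s K v) (h : (delk G s K).Adj u z) : z ∈ hset G s K v :=
  reach_trans hu (adj_reach h)

lemma hset_sub {G : SimpleGraph W} {s K : Finset W} {v : W} (hv : v ∈ s) :
    hset G s K v ⊆ ↑s := by
  intro u hu
  exact gs_mem_right (reach_mono (fun _ _ h => (delk_adj.mp h).1) hu) hv

/-- Every vertex of a connected `s` lies in the component of some `K`-vertex. -/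
lemma cover {G : SimpleGraph W} {s K : Finset W}
    (hconn : ∀ x ∈ s, ∀ y ∈ s, reach (gs G s) x y)
    {z0 : W} (hz0 : z0 ∈ K) (hz0s : z0 ∈ s) :
    ∀ u ∈ s, ∃ z ∈ K, u ∈ hset G s K z := by
  intro u hu
  obtain ⟨n, f, hf0, hfn, hf⟩ := hconn u hu z0 hz0s
  have hex : ∃ a, a ≤ n ∧ f a ∈ K := ⟨n, le_rfl, hfn ▸ hz0⟩
  classical
  let a := Nat.find hex
  obtain ⟨han, haK⟩ : a ≤ n ∧ f a ∈ K := Nat.find_spec hex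
  refine ⟨f a, haK, ?_⟩
  have hchain : ∀ i, i < a → (delk G s K).Adj (f i) (f (i + 1)) := by
    intro i hi
    refine delk_adj.mpr ⟨hf i (by omega), fun hc => ?_⟩
    exact (Nat.find_min hex hi) ⟨by omega, hc.1⟩
  exact reach_symm ⟨a, f, hf0, rfl, hchain⟩

/-- Graph cliques. -/
def clq (G : SimpleGraph W) (K : Finset W) : Prop :=
  ∀ x ∈ K, ∀ y ∈ K, x ≠ y → G.Adj x y

/-- Each vertex's neighborhood splits into two cliques with no edges in between. -/
def star (G : SimpleGraph W) (s : Finset W) : Prop :=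
  ∀ x ∈ s, ∃ A B : Finset W, Disjoint A B ∧ clq G A ∧ clq G B ∧
    (∀ a ∈ A, ∀ b ∈ B, ¬ G.Adj a b) ∧ (∀ u, (gs G s).Adj x u ↔ (u ∈ A ∨ u ∈ B))

/-- The vertex set `t` carries the structure of a path graph w.r.t. `A`. -/
def fpath (A : SimpleGraph W) (t : Set W) : Prop :=
  ∃ n : ℕ, ∃ f : ℕ → W, 1 ≤ n ∧ (∀ i, i < n → ∀ j, j < n → f i = f j → i = j) ∧
    (∀ u, u ∈ t ↔ ∃ i, i < n ∧ f i = u) ∧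
    (∀ i, i < n → ∀ j, j < n → (A.Adj (f i) (f j) ↔ (j = i + 1 ∨ i = j + 1)))

lemma fpath_congr {A B : SimpleGraph W} {t : Set W}
    (h : ∀ u ∈ t, ∀ z ∈ t, (A.Adj u z ↔ B.Adj u z)) (hp : fpath A t) : fpath B t := by
  obtain ⟨n, f, h1, h2, h3, h4⟩ := hp
  have hmem : ∀ i, i < n → f i ∈ t := fun i hi => (h3 (f i)).mpr ⟨i, hi, rfl⟩
  exact ⟨n, f, h1, h2, h3, fun i hi j hj =>
    (h (f i) (hmem i hi) (f j) (hmem j hj)).symm.trans (h4 i hi j hj)⟩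

lemma hole_lift {G : SimpleGraph W} {s : Finset W} {n : ℕ} {v : Fin n → W}
    (h : IsHole (gs G s) n v) : IsHole G n v := by
  obtain ⟨h4, hinj, hadj⟩ := h
  have hmem : ∀ i, v i ∈ s := fun i => (gs_adj.mp ((hadj i (fsucc i)).2 (Or.inl rfl))).2.1
  refine ⟨h4, hinj, fun i j => ?_⟩
  constructor
  · intro hGadj
    exact (hadj i j).1 (gs_adj.mpr ⟨hGadj, hmem i, hmem j⟩)
  · intro hc
    exact (gs_adj.mp ((hadj i j).2 hc)).1

lemma fsucc_val {l : ℕ} (i : Fin l) : (fsucc i : ℕ) = ((i : ℕ) + 1) % l := rfl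


/-- No vertex of `s` has three pairwise-distinct neighbours in `gs G s`. -/
def deg2 (G : SimpleGraph W) (s : Finset W) : Prop :=
  ∀ x ∈ s, ∀ u1 u2 u3 : W, (gs G s).Adj x u1 → (gs G s).Adj x u2 → (gs G s).Adj x u3 →
    u1 = u2 ∨ u1 = u3 ∨ u2 = u3

/-- No triangles inside `s`. -/
def ntf (G : SimpleGraph W) (s : Finset W) : Prop :=
  ¬ ∃ x y z : W, (gs G s).Adj x y ∧ (gs G s).Adj y z ∧ (gs G s).Adj x z

lemma seq_exists {A : SimpleGraph W} {x0 y0 : W} (h0 : A.Adj x0 y0)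
    (hnext : ∀ a b, A.Adj a b → ∃ u, A.Adj b u ∧ u ≠ a) :
    ∃ q : ℕ → W, (∀ k, A.Adj (q k) (q (k + 1))) ∧ ∀ k, q (k + 2) ≠ q k := by
  choose oth hA hN using hnext
  let p : ℕ → (Σ' pr : W × W, A.Adj pr.1 pr.2) :=
    fun k => Nat.rec ⟨(x0, y0), h0⟩ (fun _ q => ⟨(q.1.2, oth q.1.1 q.1.2 q.2), hA _ _ q.2⟩) k
  refine ⟨fun k => (p k).1.1, fun k => ?_, fun k => ?_⟩
  · exact (p k).2
  · exact hN _ _ (p k).2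

lemma pc (G : SimpleGraph W) [Finite W] (hf : HoleFree G) :
    ∀ s : Finset W, s.Nonempty →
      (∀ x ∈ s, ∀ y ∈ s, reach (gs G s) x y) →
      deg2 G s → ntf G s → fpath (gs G s) ↑s := by
  classical
  intro s
  induction s using Finset.strongInduction with
  | _ s ih =>
    intro hne hconn hdeg hntf
    obtain ⟨x0, hx0⟩ := hne
    by_cases hcard1 : s.card = 1
    · obtain ⟨a, ha⟩ := Finset.card_eq_one.mp hcard1
      subst ha
      refine ⟨1, fun _ => a, le_rfl, fun i hi j hj _ => by omega, ?_, ?_⟩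
      · intro u
        simp only [Finset.coe_singleton, Set.mem_singleton_iff]
        constructor
        · rintro rfl; exact ⟨0, by omega, rfl⟩
        · rintro ⟨i, _, rfl⟩; rfl
      · intro i hi j hj
        have hi0 : i = 0 := by omega
        have hj0 : j = 0 := by omega
        subst hi0; subst hj0
        constructor
        · intro h; exact absurd h ((gs G _).loopless.irrefl a)
        · rintro (h | h) <;> omega
    · have hcard2 : 2 ≤ s.card := by
        have : 0 < s.card := Finset.card_pos.mpr ⟨x0, hx0⟩
        omega
      have hnbr : ∀ x ∈ s, ∃ y, (gs G s).Adj x y := by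
        intro x hx
        have h1lt : 1 < s.card := by omega
        obtain ⟨y', hy', hyx⟩ := Finset.exists_mem_ne h1lt x
        obtain ⟨n, f, hf0, hfn, hch⟩ := hconn x hx y' hy'
        have hn : n ≠ 0 := by
          rintro rfl
          exact hyx (hfn.symm.trans hf0)
        refine ⟨f 1, ?_⟩
        rw [← hf0]
        exact hch 0 (by omega)
      by_cases huniq_ex : ∃ x ∈ s, ∃ y, (gs G s).Adj x y ∧ ∀ u, (gs G s).Adj x u → u = y
      · -- a vertex of degree one; peel it off
        obtain ⟨x, hxs, y, hxy, huniq⟩ := huniq_ex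
        have hys : y ∈ s := (gs_adj.mp hxy).2.2
        have hyx : y ≠ x := fun h => (gs G s).loopless.irrefl x (h ▸ hxy)
        set s' := s.erase x with hs'
        have hys' : y ∈ s' := Finset.mem_erase.mpr ⟨hyx, hys⟩
        have hsplice : ∀ n : ℕ, ∀ u u', u ≠ x → u' ≠ x →
            (∃ f : ℕ → W, f 0 = u ∧ f n = u' ∧ ∀ i, i < n → (gs G s).Adj (f i) (f (i + 1))) →
            reach (gs G s') u u' := by
          intro n
          induction n using Nat.strong_induction_on with
          | _ n ihn =>
            rintro u u' hu hu' ⟨f, h0, hn, hedge⟩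
            by_cases hhit : ∃ b, b ≤ n ∧ f b = x
            · obtain ⟨b, hbn, hfb⟩ := hhit
              have hb0 : b ≠ 0 := by
                rintro rfl
                rw [h0] at hfb
                exact hu hfb
              have hbn' : b ≠ n := by
                rintro rfl
                rw [hn] at hfb
                exact hu' hfb
              have hy1 : f (b - 1) = y := by
                have he := hedge (b - 1) (by omega)
                rw [show b - 1 + 1 = b by omega, hfb] at he
                exact huniq _ he.symm
              have hy2 : f (b + 1) = y := by
                have he := hedge b (by omega)
                rw [hfb] at he
                exact huniq _ he
              refine ihn (n - 2) (by omega) u u' hu hu'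
                ⟨fun i => if i < b then f i else f (i + 2), ?_, ?_, ?_⟩
              · show (if 0 < b then f 0 else f 2) = u
                rw [if_pos (show 0 < b by omega)]
                exact h0
              · show (if n - 2 < b then f (n - 2) else f (n - 2 + 2)) = u'
                by_cases hc : n - 2 < b
                · rw [if_pos hc]
                  rw [show n - 2 = b - 1 by omega, hy1, ← hy2, show b + 1 = n by omega]
                  exact hn
                · rw [if_neg hc, show n - 2 + 2 = n by omega]
                  exact hn
              · intro i hi
                show (gs G s).Adj (if i < b then f i else f (i + 2))
                  (if i + 1 < b then f (i + 1) else f (i + 1 + 2))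
                by_cases hc1 : i + 1 < b
                · rw [if_pos (show i < b by omega), if_pos hc1]
                  exact hedge i (by omega)
                · by_cases hc2 : i < b
                  · rw [if_pos hc2, if_neg hc1]
                    rw [show i = b - 1 by omega, hy1, ← hy2,
                      show b - 1 + 1 + 2 = b + 1 + 1 by omega]
                    exact hedge (b + 1) (by omega)
                  · rw [if_neg hc2, if_neg (show ¬ i + 1 < b by omega),
                      show i + 1 + 2 = i + 2 + 1 by omega]
                    exact hedge (i + 2) (by omega)
            · push_neg at hhit
              refine ⟨n, f, h0, hn, ?_⟩
              intro i hi
              have he := hedge i hi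
              exact gs_adj.mpr ⟨(gs_adj.mp he).1,
                Finset.mem_erase.mpr ⟨hhit i (by omega), (gs_adj.mp he).2.1⟩,
                Finset.mem_erase.mpr ⟨hhit (i + 1) (by omega), (gs_adj.mp he).2.2⟩⟩
        have hconn' : ∀ u ∈ s', ∀ u' ∈ s', reach (gs G s') u u' := by
          intro u hu u' hu'
          obtain ⟨n, f, h0, hn, he⟩ := hconn u (Finset.mem_of_mem_erase hu) u'
            (Finset.mem_of_mem_erase hu')
          exact hsplice n u u' (Finset.mem_erase.mp hu).1 (Finset.mem_erase.mp hu').1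
            ⟨f, h0, hn, he⟩
        have hmono' : ∀ u z, (gs G s').Adj u z → (gs G s).Adj u z := by
          intro u z h
          obtain ⟨h1, h2, h3⟩ := gs_adj.mp h
          exact gs_adj.mpr ⟨h1, Finset.mem_of_mem_erase h2, Finset.mem_of_mem_erase h3⟩
        have hdeg' : deg2 G s' := fun z hz u1 u2 u3 h1 h2 h3 =>
          hdeg z (Finset.mem_of_mem_erase hz) u1 u2 u3 (hmono' _ _ h1) (hmono' _ _ h2)
            (hmono' _ _ h3)
        have hntf' : ntf G s' := fun ⟨p, qq, r, h1, h2, h3⟩ =>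
          hntf ⟨p, qq, r, hmono' _ _ h1, hmono' _ _ h2, hmono' _ _ h3⟩
        obtain ⟨k, g0, hk1, hinj0, hcov0, hadj0⟩ :=
          ih s' (Finset.erase_ssubset hxs) ⟨y, hys'⟩ hconn' hdeg' hntf'
        have hg0mem : ∀ i, i < k → g0 i ∈ s' := by
          intro i hi
          have := (hcov0 (g0 i)).mpr ⟨i, hi, rfl⟩
          exact_mod_cast this
        have hadjS' : ∀ i, i < k → ∀ j, j < k →
            ((gs G s).Adj (g0 i) (g0 j) ↔ (j = i + 1 ∨ i = j + 1)) := by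
          intro i hi j hj
          rw [← hadj0 i hi j hj]
          constructor
          · intro h
            exact gs_adj.mpr ⟨(gs_adj.mp h).1, hg0mem i hi, hg0mem j hj⟩
          · exact hmono' _ _
        obtain ⟨t, htk, hgt⟩ := (hcov0 y).mp (Finset.mem_coe.mpr hys')
        have hend : t = 0 ∨ t = k - 1 := by
          by_contra hc
          push_neg at hc
          obtain ⟨ht0, htk1⟩ := hc
          have h1 : (gs G s).Adj y (g0 (t - 1)) := by
            have := (hadjS' t htk (t - 1) (by omega)).mpr (Or.inr (by omega))
            rwa [hgt] at this
          have h2 : (gs G s).Adj y (g0 (t + 1)) := by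
            have := (hadjS' t htk (t + 1) (by omega)).mpr (Or.inl rfl)
            rwa [hgt] at this
          have h3 : (gs G s).Adj y x := hxy.symm
          rcases hdeg y hys _ _ _ h1 h2 h3 with h | h | h
          · have := hinj0 (t - 1) (by omega) (t + 1) (by omega) h
            omega
          · have hmem := hg0mem (t - 1) (by omega)
            rw [h] at hmem
            exact (Finset.mem_erase.mp hmem).1 rfl
          · have hmem := hg0mem (t + 1) (by omega)
            rw [h] at hmem
            exact (Finset.mem_erase.mp hmem).1 rfl
        obtain ⟨g, hinjg, hcovg, hadjg, hgy⟩ :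
            ∃ g : ℕ → W, (∀ i, i < k → ∀ j, j < k → g i = g j → i = j) ∧
              (∀ u, u ∈ (↑s' : Set W) ↔ ∃ i, i < k ∧ g i = u) ∧
              (∀ i, i < k → ∀ j, j < k →
                ((gs G s).Adj (g i) (g j) ↔ (j = i + 1 ∨ i = j + 1))) ∧
              g (k - 1) = y := by
          rcases hend with h | h
          · by_cases hk1' : k = 1
            · exact ⟨g0, hinj0, hcov0, hadjS', by rw [show k - 1 = t by omega]; exact hgt⟩
            · refine ⟨fun i => g0 (k - 1 - i), ?_, ?_, ?_, ?_⟩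
              · intro i hi j hj he
                have := hinj0 (k - 1 - i) (by omega) (k - 1 - j) (by omega) he
                omega
              · intro u
                rw [hcov0 u]
                constructor
                · rintro ⟨i, hi, hei⟩
                  refine ⟨k - 1 - i, by omega, ?_⟩
                  show g0 (k - 1 - (k - 1 - i)) = u
                  rw [show k - 1 - (k - 1 - i) = i by omega]
                  exact hei
                · rintro ⟨i, hi, hei⟩
                  exact ⟨k - 1 - i, by omega, hei⟩
              · intro i hi j hj
                rw [hadjS' (k - 1 - i) (by omega) (k - 1 - j) (by omega)]
                omega
              · show g0 (k - 1 - (k - 1)) = y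
                rw [show k - 1 - (k - 1) = 0 by omega, ← h]
                exact hgt
          · exact ⟨g0, hinj0, hcov0, hadjS', by rw [show k - 1 = t by omega]; exact hgt⟩
        have hgmem : ∀ i, i < k → g i ∈ s' := by
          intro i hi
          have := (hcovg (g i)).mpr ⟨i, hi, rfl⟩
          exact_mod_cast this
        refine ⟨k + 1, fun i => if i < k then g i else x, by omega, ?_, ?_, ?_⟩
        · intro i hi j hj he
          have he' : (if i < k then g i else x) = (if j < k then g j else x) := he
          by_cases h1 : i < k <;> by_cases h2 : j < k
          · rw [if_pos h1, if_pos h2] at he'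
            exact hinjg i h1 j h2 he'
          · rw [if_pos h1, if_neg h2] at he'
            exfalso
            have hmem := hgmem i h1
            rw [he'] at hmem
            exact (Finset.mem_erase.mp hmem).1 rfl
          · rw [if_neg h1, if_pos h2] at he'
            exfalso
            have hmem := hgmem j h2
            rw [← he'] at hmem
            exact (Finset.mem_erase.mp hmem).1 rfl
          · omega
        · intro u
          constructor
          · intro hu
            by_cases hux : u = x
            · refine ⟨k, by omega, ?_⟩
              show (if k < k then g k else x) = u
              rw [if_neg (lt_irrefl k)]
              exact hux.symm
            · have hu' : u ∈ (↑s' : Set W) := by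
                rw [hs']
                simp only [Finset.coe_erase, Set.mem_diff, Set.mem_singleton_iff]
                exact ⟨hu, hux⟩
              obtain ⟨i, hi, hei⟩ := (hcovg u).mp hu'
              refine ⟨i, by omega, ?_⟩
              show (if i < k then g i else x) = u
              rw [if_pos hi]
              exact hei
          · rintro ⟨i, hi, rfl⟩
            show (if i < k then g i else x) ∈ (↑s : Set W)
            by_cases h1 : i < k
            · rw [if_pos h1]
              exact Finset.mem_coe.mpr (Finset.mem_of_mem_erase (hgmem i h1))
            · rw [if_neg h1]
              exact Finset.mem_coe.mpr hxs
        · intro i hi j hj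
          show (gs G s).Adj (if i < k then g i else x) (if j < k then g j else x) ↔
            (j = i + 1 ∨ i = j + 1)
          by_cases h1 : i < k <;> by_cases h2 : j < k
          · rw [if_pos h1, if_pos h2, hadjg i h1 j h2]
          · have hj' : j = k := by omega
            rw [if_pos h1, if_neg h2]
            constructor
            · intro hadj
              have hgi : g i = y := huniq _ hadj.symm
              have : i = k - 1 := hinjg i h1 (k - 1) (by omega) (hgi.trans hgy.symm)
              omega
            · intro hor
              have hik : i = k - 1 := by rcases hor with h | h <;> omega
              rw [hik, hgy]
              exact hxy.symm
          · have hi' : i = k := by omega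
            rw [if_neg h1, if_pos h2]
            constructor
            · intro hadj
              have hgj : g j = y := huniq _ hadj
              have : j = k - 1 := hinjg j h2 (k - 1) (by omega) (hgj.trans hgy.symm)
              omega
            · intro hor
              have hjk : j = k - 1 := by rcases hor with h | h <;> omega
              rw [hjk, hgy]
              exact hxy
          · have hi' : i = k := by omega
            have hj' : j = k := by omega
            rw [if_neg h1, if_neg h2]
            constructor
            · intro hadj
              exact absurd hadj ((gs G s).loopless.irrefl x)
            · intro hor
              rcases hor with h | h <;> omega
      · -- no degree-one vertex: build a cycle, contradiction
        exfalso
        push_neg at huniq_ex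
        obtain ⟨y0, hy0⟩ := hnbr x0 hx0
        obtain ⟨q, hqadj, hqnb⟩ := seq_exists hy0
          (fun a b hab => huniq_ex b (gs_adj.mp hab).2.2 a hab.symm)
        obtain ⟨a', b', hab_ne, hab_eq⟩ := Finite.exists_ne_map_eq_of_infinite q
        have hrep : ∃ b, ∃ a, a < b ∧ q a = q b := by
          rcases Nat.lt_or_ge a' b' with h | h
          · exact ⟨b', a', h, hab_eq⟩
          · exact ⟨a', b', by omega, hab_eq.symm⟩
        obtain ⟨a, hab, hqab⟩ := Nat.find_spec hrep
        set b0 := Nat.find hrep with hb0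
        have hmin : ∀ mm, mm < b0 → ¬ ∃ aa, aa < mm ∧ q aa = q mm :=
          fun mm hmm => Nat.find_min hrep hmm
        have hinj : ∀ i j, i < j → j < b0 → q i ≠ q j := by
          intro i j h2 h3 he
          exact hmin j h3 ⟨i, h2, he⟩
        have hL1 : a + 1 ≠ b0 := by
          intro h
          rw [← h] at hqab
          exact (gs G s).loopless.irrefl (q a) (hqab ▸ hqadj a)
        have hL2 : a + 2 ≠ b0 := by
          intro h
          rw [← h] at hqab
          exact hqnb a hqab.symm
        set L := b0 - a with hLdef
        have hL3ge : 3 ≤ L := by omega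
        have hvadj : ∀ k, k < L → (gs G s).Adj (q (a + k)) (q (a + (k + 1) % L)) := by
          intro k hk
          by_cases h : k + 1 < L
          · rw [Nat.mod_eq_of_lt h]
            exact hqadj (a + k)
          · have hkL : k + 1 = L := by omega
            rw [hkL, Nat.mod_self]
            have hadj := hqadj (a + k)
            rw [show a + k + 1 = b0 by omega, ← hqab] at hadj
            simpa using hadj
        have hqinj : ∀ p p', p < L → p' < L → p ≠ p' → q (a + p) ≠ q (a + p') := by
          intro p p' hp hp' hne he
          rcases Nat.lt_trichotomy p p' with h | h | h
          · exact hinj (a + p) (a + p') (by omega) (by omega) he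
          · exact hne h
          · exact hinj (a + p') (a + p) (by omega) (by omega) he.symm
        by_cases hLeq3 : L = 3
        · refine hntf ⟨q a, q (a + 1), q (a + 2), hqadj a, hqadj (a + 1), ?_⟩
          have h3 := hqadj (a + 2)
          rw [show a + 2 + 1 = b0 by omega, ← hqab] at h3
          exact h3.symm
        · have hL4 : 4 ≤ L := by omega
          apply hf L (fun k : Fin L => q (a + ↑k))
          apply hole_lift (s := s)
          refine ⟨hL4, ?_, ?_⟩
          · intro i j hij
            rcases Nat.lt_trichotomy (↑i : ℕ) (↑j : ℕ) with h | h | h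
            · exact absurd hij (hqinj ↑i ↑j i.isLt j.isLt (by omega))
            · exact Fin.val_injective h
            · exact absurd hij.symm (hqinj ↑j ↑i j.isLt i.isLt (by omega))
          · intro i j
            constructor
            · intro hadj
              by_contra hcon
              push_neg at hcon
              obtain ⟨hc1, hc2⟩ := hcon
              have hIL : (↑i : ℕ) < L := i.isLt
              have hJL : (↑j : ℕ) < L := j.isLt
              have hIJ : (↑i : ℕ) ≠ (↑j : ℕ) := by
                intro h
                have hij : i = j := Fin.val_injective h
                subst hij
                exact (gs G s).loopless.irrefl _ hadj
              have hr1 : ((↑i : ℕ) + 1) % L = if (↑i : ℕ) + 1 < L then (↑i : ℕ) + 1 else 0 := by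
                split_ifs with h
                · exact Nat.mod_eq_of_lt h
                · rw [show (↑i : ℕ) + 1 = L by omega, Nat.mod_self]
              have hr2 : ((↑i : ℕ) + L - 1) % L =
                  if (↑i : ℕ) = 0 then L - 1 else (↑i : ℕ) - 1 := by
                split_ifs with h
                · rw [h, show 0 + L - 1 = L - 1 by omega]
                  exact Nat.mod_eq_of_lt (by omega)
                · rw [show (↑i : ℕ) + L - 1 = ((↑i : ℕ) - 1) + L by omega, Nat.add_mod_right]
                  exact Nat.mod_eq_of_lt (by omega)
              have hfs1 : (↑j : ℕ) ≠ ((↑i : ℕ) + 1) % L := by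
                intro h
                exact hc1 (Fin.val_injective (h.trans (fsucc_val i).symm))
              have hfs2 : (↑j : ℕ) ≠ ((↑i : ℕ) + L - 1) % L := by
                intro h
                apply hc2
                apply Fin.val_injective
                show (↑i : ℕ) = ((↑j : ℕ) + 1) % L
                rw [hr2] at h
                split_ifs at h with h0
                · rw [h, h0, show L - 1 + 1 = L by omega, Nat.mod_self]
                · rw [h, show (↑i : ℕ) - 1 + 1 = (↑i : ℕ) by omega]
                  exact (Nat.mod_eq_of_lt (by omega)).symm
              have ha1 : (gs G s).Adj (q (a + ↑i)) (q (a + ((↑i : ℕ) + 1) % L)) := hvadj ↑i hIL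
              have hI' : ((↑i : ℕ) + L - 1) % L < L := Nat.mod_lt _ (by omega)
              have hstepI : (((↑i : ℕ) + L - 1) % L + 1) % L = (↑i : ℕ) := by
                rw [hr2]
                split_ifs with h0
                · rw [show L - 1 + 1 = L by omega, Nat.mod_self]
                  omega
                · rw [show (↑i : ℕ) - 1 + 1 = (↑i : ℕ) by omega]
                  exact Nat.mod_eq_of_lt (by omega)
              have ha2 : (gs G s).Adj (q (a + ((↑i : ℕ) + L - 1) % L)) (q (a + ↑i)) := by
                have hv2 := hvadj (((↑i : ℕ) + L - 1) % L) hI'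
                rwa [hstepI] at hv2
              have ha3 : (gs G s).Adj (q (a + ↑i)) (q (a + ↑j)) := hadj
              have hne12 : ((↑i : ℕ) + 1) % L ≠ ((↑i : ℕ) + L - 1) % L := by
                rw [hr1, hr2]
                split_ifs <;> omega
              have hr1lt : ((↑i : ℕ) + 1) % L < L := Nat.mod_lt _ (by omega)
              rcases hdeg (q (a + ↑i)) (gs_adj.mp ha1).2.1 _ _ _ ha1 ha2.symm ha3 with h | h | h
              · exact hqinj _ _ hr1lt hI' hne12 h
              · exact hqinj _ _ hr1lt hJL (Ne.symm hfs1) h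
              · exact hqinj _ _ hI' hJL (Ne.symm hfs2) h
            · rintro (h | h)
              · subst h
                exact hvadj ↑i i.isLt
              · subst h
                exact (hvadj ↑j j.isLt).symm



lemma exists_maxclique (G : SimpleGraph W) {s : Finset W} {x y z : W}
    (hxy : (gs G s).Adj x y) (hyz : (gs G s).Adj y z) (hxz : (gs G s).Adj x z) :
    ∃ K : Finset W, K ⊆ s ∧ clq G K ∧ 3 ≤ K.card ∧
      ∀ w' ∈ s, w' ∉ K → ¬ ∀ u ∈ K, (gs G s).Adj w' u := by
  classical
  set F := s.powerset.filter (fun t => clq G t ∧ 3 ≤ t.card) with hF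
  have hT : ({x, y, z} : Finset W) ∈ F := by
    rw [hF, Finset.mem_filter, Finset.mem_powerset]
    refine ⟨?_, ?_, ?_⟩
    · intro u hu
      simp only [Finset.mem_insert, Finset.mem_singleton] at hu
      rcases hu with rfl | rfl | rfl
      · exact (gs_adj.mp hxy).2.1
      · exact (gs_adj.mp hxy).2.2
      · exact (gs_adj.mp hxz).2.2
    · intro a ha b hb hab
      simp only [Finset.mem_insert, Finset.mem_singleton] at ha hb
      rcases ha with rfl | rfl | rfl <;> rcases hb with rfl | rfl | rfl <;>
        first
          | exact absurd rfl hab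
          | exact (gs_adj.mp hxy).1
          | exact (gs_adj.mp hyz).1
          | exact (gs_adj.mp hxz).1
          | exact ((gs_adj.mp hxy).1).symm
          | exact ((gs_adj.mp hyz).1).symm
          | exact ((gs_adj.mp hxz).1).symm
    · have h3 : ({x, y, z} : Finset W).card = 3 :=
        Finset.card_eq_three.mpr ⟨x, y, z, hxy.ne, hxz.ne, hyz.ne, rfl⟩
      omega
  obtain ⟨K, hKF, hKmax⟩ := F.exists_max_image Finset.card ⟨_, hT⟩
  have hKF' := hKF
  rw [hF, Finset.mem_filter, Finset.mem_powerset] at hKF'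
  obtain ⟨hKs, hKclq, hK3⟩ := hKF'
  refine ⟨K, hKs, hKclq, hK3, ?_⟩
  intro w' hw's hw'K hall
  have hins : insert w' K ∈ F := by
    rw [hF, Finset.mem_filter, Finset.mem_powerset]
    refine ⟨Finset.insert_subset hw's hKs, ?_, ?_⟩
    · intro a ha b hb hab
      rcases Finset.mem_insert.mp ha with rfl | ha' <;>
        rcases Finset.mem_insert.mp hb with rfl | hb'
      · exact absurd rfl hab
      · exact (gs_adj.mp (hall b hb')).1
      · exact ((gs_adj.mp (hall a ha')).1).symm
      · exact hKclq a ha' b hb' hab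
    · have hc := Finset.card_insert_of_notMem hw'K
      omega
  have hle := hKmax _ hins
  rw [Finset.card_insert_of_notMem hw'K] at hle
  omega

lemma sep (G : SimpleGraph W) (hf : HoleFree G) {s K : Finset W} (hstar : star G s)
    (hK : clq G K) (hKs : K ⊆ s) (h3 : 3 ≤ K.card)
    (hmax : ∀ z ∈ s, z ∉ K → ¬ ∀ u ∈ K, (gs G s).Adj z u) :
    ∀ x ∈ K, ∀ y ∈ K, x ≠ y → ¬ reach (delk G s K) x y := by
  classical
  by_contra hcon
  push_neg at hcon
  obtain ⟨x', hx', y', hy', hxy', hr⟩ := hcon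
  have hbad : ∃ n, ∃ x y, x ∈ K ∧ y ∈ K ∧ x ≠ y ∧
      ∃ f : ℕ → W, f 0 = x ∧ f n = y ∧ ∀ i, i < n → (delk G s K).Adj (f i) (f (i + 1)) := by
    obtain ⟨n, f, h0, h1, h2⟩ := hr
    exact ⟨n, x', y', hx', hy', hxy', f, h0, h1, h2⟩
  obtain ⟨x, y, hxK, hyK, hxy, f, hf0, hfn, hedge⟩ := Nat.find_spec hbad
  set n0 := Nat.find hbad with hn0def
  have hmin : ∀ mm, mm < n0 → ¬ ∃ x y, x ∈ K ∧ y ∈ K ∧ x ≠ y ∧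
      ∃ f : ℕ → W, f 0 = x ∧ f mm = y ∧ ∀ i, i < mm → (delk G s K).Adj (f i) (f (i + 1)) :=
    fun mm hmm => Nat.find_min hbad hmm
  have hne0 : n0 ≠ 0 := by
    intro h
    apply hxy
    rw [← hf0, ← hfn, h]
  have hne1 : n0 ≠ 1 := by
    intro h
    refine (delk_adj.mp (hedge 0 (by omega))).2 ⟨by rw [hf0]; exact hxK, ?_⟩
    rw [show (0 : ℕ) + 1 = n0 by omega, hfn]
    exact hyK
  have hn2 : 2 ≤ n0 := by omega
  have hinj : ∀ i j, i < j → j ≤ n0 → f i ≠ f j := by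
    intro i j hij hj he
    apply hmin (n0 - (j - i)) (by omega)
    refine ⟨x, y, hxK, hyK, hxy, fun t => if t ≤ i then f t else f (t + (j - i)), ?_, ?_, ?_⟩
    · show (if 0 ≤ i then f 0 else f (0 + (j - i))) = x
      rw [if_pos (Nat.zero_le i)]
      exact hf0
    · show (if n0 - (j - i) ≤ i then f (n0 - (j - i)) else f (n0 - (j - i) + (j - i))) = y
      by_cases hc : n0 - (j - i) ≤ i
      · rw [if_pos hc, show n0 - (j - i) = i by omega, he, show j = n0 by omega]
        exact hfn
      · rw [if_neg hc, show n0 - (j - i) + (j - i) = n0 by omega]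
        exact hfn
    · intro t ht
      show (delk G s K).Adj (if t ≤ i then f t else f (t + (j - i)))
        (if t + 1 ≤ i then f (t + 1) else f (t + 1 + (j - i)))
      by_cases hc1 : t + 1 ≤ i
      · rw [if_pos (show t ≤ i by omega), if_pos hc1]
        exact hedge t (by omega)
      · by_cases hc2 : t ≤ i
        · rw [if_pos hc2, if_neg hc1, show t = i by omega, he,
            show i + 1 + (j - i) = j + 1 by omega]
          exact hedge j (by omega)
        · rw [if_neg hc2, if_neg hc1, show t + 1 + (j - i) = t + (j - i) + 1 by omega]
          exact hedge (t + (j - i)) (by omega)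
  have hintK : ∀ b, 0 < b → b < n0 → f b ∉ K := by
    intro b h1 h2 hbK
    apply hmin b h2
    exact ⟨x, f b, hxK, hbK, fun he => hinj 0 b h1 (by omega) (by rw [hf0]; exact he), f, hf0,
      rfl, fun t ht => hedge t (by omega)⟩
  by_cases hn2' : n0 = 2
  · -- triangle case
    have hzK : f 1 ∉ K := hintK 1 (by omega) (by omega)
    have hxz : (gs G s).Adj x (f 1) := by
      have h := (delk_adj.mp (hedge 0 (by omega))).1
      rwa [hf0] at h
    have hzy : (gs G s).Adj (f 1) y := by
      have h := (delk_adj.mp (hedge 1 (by omega))).1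
      rwa [show (1 : ℕ) + 1 = n0 by omega, hfn] at h
    have hzs : f 1 ∈ s := (gs_adj.mp hxz).2.2
    refine hmax (f 1) hzs hzK ?_
    intro u huK
    by_cases hux : u = x
    · rw [hux]
      exact hxz.symm
    by_cases huy : u = y
    · rw [huy]
      exact hzy
    obtain ⟨A, B, hdisj, hclqA, hclqB, hcross, hiff⟩ := hstar x (hKs hxK)
    have hsame : ∀ p q', (gs G s).Adj x p → (gs G s).Adj x q' → G.Adj p q' →
        (p ∈ A ∧ q' ∈ A) ∨ (p ∈ B ∧ q' ∈ B) := by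
      intro p q' hp hq' hpq
      have hpA := (hiff p).mp hp
      have hqA := (hiff q').mp hq'
      rcases hpA with h1 | h1 <;> rcases hqA with h2 | h2
      · exact Or.inl ⟨h1, h2⟩
      · exact absurd hpq (hcross p h1 q' h2)
      · exact absurd hpq.symm (hcross q' h2 p h1)
      · exact Or.inr ⟨h1, h2⟩
    have hxyadj : (gs G s).Adj x y := gs_adj.mpr ⟨hK x hxK y hyK hxy, hKs hxK, hKs hyK⟩
    have hxuadj : (gs G s).Adj x u :=
      gs_adj.mpr ⟨hK x hxK u huK (fun h => hux h.symm), hKs hxK, hKs huK⟩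
    have h1 := hsame (f 1) y hxz hxyadj (gs_adj.mp hzy).1
    have h2 := hsame u y hxuadj hxyadj (hK u huK y hyK huy)
    have hzu : G.Adj (f 1) u := by
      have hzne : f 1 ≠ u := fun h => hzK (h ▸ huK)
      rcases h1 with ⟨hzA, hyA⟩ | ⟨hzB, hyB⟩ <;> rcases h2 with ⟨huA, hyA'⟩ | ⟨huB, hyB'⟩
      · exact hclqA (f 1) hzA u huA hzne
      · exact absurd hyA (Finset.disjoint_right.mp hdisj hyB')
      · exact absurd hyA' (Finset.disjoint_right.mp hdisj hyB)
      · exact hclqB (f 1) hzB u huB hzne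
    exact gs_adj.mpr ⟨hzu, hzs, hKs huK⟩
  · -- n0 ≥ 3 : hole case
    have hn3 : 3 ≤ n0 := by omega
    have hmemS : ∀ i, i ≤ n0 → f i ∈ s := by
      intro i hi
      by_cases h : i < n0
      · exact (gs_adj.mp (delk_adj.mp (hedge i h)).1).2.1
      · have hii : i = n0 := by omega
        have he := hedge (n0 - 1) (by omega)
        have hmem := (gs_adj.mp (delk_adj.mp he).1).2.2
        rw [show n0 - 1 + 1 = n0 by omega] at hmem
        rw [hii]
        exact hmem
    have hshort : ∀ I J, I < J → J ≤ n0 → J ≠ I + 1 → ¬ (I = 0 ∧ J = n0) →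
        ¬ (gs G s).Adj (f I) (f J) := by
      intro I J hIJ hJ hJne hno hadj
      have hnotboth : ¬ (f I ∈ K ∧ f J ∈ K) := by
        rintro ⟨h1, h2⟩
        have hI0 : I = 0 := by
          by_contra h
          exact hintK I (by omega) (by omega) h1
        have hJn : J = n0 := by
          by_contra h
          exact hintK J (by omega) (by omega) h2
        exact hno ⟨hI0, hJn⟩
      have hdadj : (delk G s K).Adj (f I) (f J) := delk_adj.mpr ⟨hadj, hnotboth⟩
      apply hmin (n0 - (J - I) + 1) (by omega)
      refine ⟨x, y, hxK, hyK, hxy, fun t => if t ≤ I then f t else f (t + (J - I) - 1),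
        ?_, ?_, ?_⟩
      · show (if 0 ≤ I then f 0 else f (0 + (J - I) - 1)) = x
        rw [if_pos (Nat.zero_le I)]
        exact hf0
      · show (if n0 - (J - I) + 1 ≤ I then f (n0 - (J - I) + 1)
          else f (n0 - (J - I) + 1 + (J - I) - 1)) = y
        rw [if_neg (by omega), show n0 - (J - I) + 1 + (J - I) - 1 = n0 by omega]
        exact hfn
      · intro t ht
        show (delk G s K).Adj (if t ≤ I then f t else f (t + (J - I) - 1))
          (if t + 1 ≤ I then f (t + 1) else f (t + 1 + (J - I) - 1))
        by_cases hc1 : t + 1 ≤ I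
        · rw [if_pos (show t ≤ I by omega), if_pos hc1]
          exact hedge t (by omega)
        · by_cases hc2 : t ≤ I
          · rw [if_pos hc2, if_neg hc1, show t + 1 + (J - I) - 1 = J by omega,
              show t = I by omega]
            exact hdadj
          · rw [if_neg hc2, if_neg hc1,
              show t + 1 + (J - I) - 1 = (t + (J - I) - 1) + 1 by omega]
            exact hedge (t + (J - I) - 1) (by omega)
    have hcons : ∀ p : Fin (n0 + 1), (gs G s).Adj (f ↑p) (f ((↑p + 1) % (n0 + 1))) := by
      intro p
      by_cases hc : (↑p : ℕ) + 1 < n0 + 1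
      · rw [Nat.mod_eq_of_lt hc]
        exact (delk_adj.mp (hedge ↑p (by omega))).1
      · rw [show (↑p : ℕ) + 1 = n0 + 1 by omega, Nat.mod_self,
          show (↑p : ℕ) = n0 by omega, hfn, hf0]
        exact gs_adj.mpr ⟨hK y hyK x hxK (Ne.symm hxy), hKs hyK, hKs hxK⟩
    apply hf (n0 + 1) (fun k : Fin (n0 + 1) => f ↑k)
    apply hole_lift (s := s)
    refine ⟨by omega, ?_, ?_⟩
    · intro i j hij
      rcases Nat.lt_trichotomy (↑i : ℕ) (↑j : ℕ) with h | h | h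
      · exact absurd hij (hinj ↑i ↑j h (by omega))
      · exact Fin.val_injective h
      · exact absurd hij.symm (hinj ↑j ↑i h (by omega))
    · intro i j
      constructor
      · intro hadj
        by_contra hcon2
        push_neg at hcon2
        obtain ⟨hc1, hc2⟩ := hcon2
        have hne : (↑i : ℕ) ≠ (↑j : ℕ) := by
          intro h
          have hij' : i = j := Fin.val_injective h
          rw [hij'] at hadj
          exact (gs G s).loopless.irrefl _ hadj
        rcases Nat.lt_trichotomy (↑i : ℕ) (↑j : ℕ) with h | h | h
        · refine hshort ↑i ↑j h (by omega) ?_ ?_ hadj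
          · intro hJI
            apply hc1
            apply Fin.val_injective
            show (↑j : ℕ) = ((↑i : ℕ) + 1) % (n0 + 1)
            rw [hJI]
            exact (Nat.mod_eq_of_lt (by omega)).symm
          · rintro ⟨hI0, hJn⟩
            apply hc2
            apply Fin.val_injective
            show (↑i : ℕ) = ((↑j : ℕ) + 1) % (n0 + 1)
            rw [hI0, hJn, Nat.mod_self]
        · exact absurd h hne
        · refine hshort ↑j ↑i h (by omega) ?_ ?_ hadj.symm
          · intro hIJ
            apply hc2
            apply Fin.val_injective
            show (↑i : ℕ) = ((↑j : ℕ) + 1) % (n0 + 1)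
            rw [hIJ]
            exact (Nat.mod_eq_of_lt (by omega)).symm
          · rintro ⟨hJ0, hIn⟩
            apply hc1
            apply Fin.val_injective
            show (↑j : ℕ) = ((↑i : ℕ) + 1) % (n0 + 1)
            rw [hJ0, hIn, Nat.mod_self]
      · rintro (h | h)
        · subst h
          exact hcons i
        · subst h
          exact (hcons j).symm

lemma conn_hset (G : SimpleGraph W) {s K : Finset W} {v : W} {s' : Finset W}
    (hs' : (↑s' : Set W) = hset G s K v) :
    ∀ x ∈ s', ∀ y ∈ s', reach (gs G s') x y := by
  intro x hx y hy
  have hx' : x ∈ hset G s K v := by rw [← hs']; exact_mod_cast hx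
  have hy' : y ∈ hset G s K v := by rw [← hs']; exact_mod_cast hy
  obtain ⟨n, f, h0, h1, h2⟩ := reach_trans (reach_symm hx') hy'
  have hall : ∀ i, i ≤ n → f i ∈ hset G s K v := by
    intro i
    induction i with
    | zero => intro _; rw [h0]; exact hx'
    | succ t iht => intro ht; exact hset_closed (iht (by omega)) (h2 t (by omega))
  refine ⟨n, f, h0, h1, ?_⟩
  intro i hi
  have he := h2 i hi
  refine gs_adj.mpr ⟨(gs_adj.mp (delk_adj.mp he).1).1, ?_, ?_⟩
  · have hm := hall i (by omega)
    rw [← hs'] at hm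
    exact_mod_cast hm
  · have hm := hall (i + 1) (by omega)
    rw [← hs'] at hm
    exact_mod_cast hm

lemma star_hset (G : SimpleGraph W) {s K : Finset W} (hstar : star G s) (hKs : K ⊆ s)
    (hsep : ∀ x ∈ K, ∀ y ∈ K, x ≠ y → ¬ reach (delk G s K) x y) {v : W} (hv : v ∈ K)
    {s' : Finset W} (hs' : (↑s' : Set W) = hset G s K v) : star G s' := by
  have hmemh : ∀ u : W, u ∈ s' ↔ u ∈ hset G s K v := by
    intro u
    rw [← hs']
    exact Iff.rfl
  have hnotK : ∀ u ∈ s', u ≠ v → u ∉ K := by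
    intro u hu hne huK
    exact hsep v hv u huK (Ne.symm hne) ((hmemh u).mp hu)
  intro x hx
  have hxh : x ∈ hset G s K v := (hmemh x).mp hx
  have hxs : x ∈ s := Finset.mem_coe.mp (hset_sub (hKs hv) hxh)
  obtain ⟨A, B, hdisj, hcA, hcB, hcross, hiff⟩ := hstar x hxs
  by_cases hxv : x = v
  · refine ⟨A \ K, B \ K, Disjoint.mono Finset.sdiff_subset Finset.sdiff_subset hdisj,
      fun a ha b hb hab => hcA a (Finset.mem_sdiff.mp ha).1 b (Finset.mem_sdiff.mp hb).1 hab,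
      fun a ha b hb hab => hcB a (Finset.mem_sdiff.mp ha).1 b (Finset.mem_sdiff.mp hb).1 hab,
      fun a ha b hb => hcross a (Finset.mem_sdiff.mp ha).1 b (Finset.mem_sdiff.mp hb).1, ?_⟩
    intro u
    constructor
    · intro hadj
      obtain ⟨hG, hxs', hus'⟩ := gs_adj.mp hadj
      have huh : u ∈ hset G s K v := (hmemh u).mp hus'
      have hune : u ≠ v := by
        intro h
        apply (gs G s').loopless.irrefl x
        rw [h, ← hxv] at hadj
        exact hadj
      have huK : u ∉ K := hnotK u hus' hune
      have hadj2 : (gs G s).Adj x u :=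
        gs_adj.mpr ⟨hG, hxs, Finset.mem_coe.mp (hset_sub (hKs hv) huh)⟩
      have hmemAB := (hiff u).mp hadj2
      rcases hmemAB with hm | hm
      · exact Or.inl (Finset.mem_sdiff.mpr ⟨hm, huK⟩)
      · exact Or.inr (Finset.mem_sdiff.mpr ⟨hm, huK⟩)
    · intro hu
      have huAB : (u ∈ A ∨ u ∈ B) ∧ u ∉ K := by
        rcases hu with h | h
        · exact ⟨Or.inl (Finset.mem_sdiff.mp h).1, (Finset.mem_sdiff.mp h).2⟩
        · exact ⟨Or.inr (Finset.mem_sdiff.mp h).1, (Finset.mem_sdiff.mp h).2⟩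
      have hadj : (gs G s).Adj x u := (hiff u).mpr huAB.1
      have hdadj : (delk G s K).Adj v u := by
        rw [← hxv]
        exact delk_adj.mpr ⟨hadj, fun hc => huAB.2 hc.2⟩
      have huh : u ∈ hset G s K v := hset_closed (hset_self v) hdadj
      exact gs_adj.mpr ⟨(gs_adj.mp hadj).1, hx, (hmemh u).mpr huh⟩
  · have hxK : x ∉ K := hnotK x hx hxv
    refine ⟨A, B, hdisj, hcA, hcB, hcross, ?_⟩
    intro u
    rw [← hiff u]
    constructor
    · intro h
      obtain ⟨hG, h1, h2⟩ := gs_adj.mp h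
      exact gs_adj.mpr ⟨hG, Finset.mem_coe.mp (hset_sub (hKs hv) ((hmemh x).mp h1)),
        Finset.mem_coe.mp (hset_sub (hKs hv) ((hmemh u).mp h2))⟩
    · intro h
      have hdadj : (delk G s K).Adj x u := delk_adj.mpr ⟨h, fun hc => hxK hc.1⟩
      have huh : u ∈ hset G s K v := hset_closed hxh hdadj
      exact gs_adj.mpr ⟨(gs_adj.mp h).1, hx, (hmemh u).mpr huh⟩

lemma main (G : SimpleGraph W) [Finite W] (hf : HoleFree G) :
    ∀ N : ℕ, ∀ s : Finset W, s.card ≤ N →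
      (∀ x ∈ s, ∀ y ∈ s, reach (gs G s) x y) → star G s →
      ∀ w₀, w₀ ∈ s → ¬ fpath (gs G s) ↑s →
      ∃ K : Finset W, K ⊆ s ∧ clq G K ∧ 3 ≤ K.card ∧
        ∃ v ∈ K, w₀ ∉ hset G s K v ∧ (∀ z ∈ K, z ∈ hset G s K v → z = v) ∧
          fpath (gs G s) (hset G s K v) := by
  intro N
  induction N with
  | zero =>
    intro s hcard hconn hstar w₀ hw₀ _
    have := Finset.card_pos.mpr ⟨w₀, hw₀⟩
    omega
  | succ N ihN =>
    intro s hcard hconn hstar w₀ hw₀ hnp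
    by_cases htri : ∃ x y z : W, (gs G s).Adj x y ∧ (gs G s).Adj y z ∧ (gs G s).Adj x z
    · obtain ⟨x, y, z, hxy, hyz, hxz⟩ := htri
      obtain ⟨K, hKs, hKclq, hK3, hKmax⟩ := exists_maxclique G hxy hyz hxz
      have hsepK := sep G hf hstar hKclq hKs hK3 hKmax
      obtain ⟨z0, hz0⟩ := Finset.card_pos.mp (show 0 < K.card by omega)
      obtain ⟨vstar, hvstarK, hwmem⟩ := cover hconn hz0 (hKs hz0) w₀ hw₀
      obtain ⟨v, hvK, hvne⟩ : ∃ v ∈ K, v ≠ vstar := by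
        obtain ⟨a, ha, b, hb, hab⟩ := Finset.one_lt_card.mp (show 1 < K.card by omega)
        by_cases h : a = vstar
        · exact ⟨b, hb, fun hbv => hab (h.trans hbv.symm)⟩
        · exact ⟨a, ha, h⟩
      have hwnot : w₀ ∉ hset G s K v := by
        intro hmem
        exact hsepK v hvK vstar hvstarK hvne (reach_trans hmem (reach_symm hwmem))
      have hKmemH : ∀ z' ∈ K, z' ∈ hset G s K v → z' = v := by
        intro z' hz' hmem
        by_contra hne
        exact hsepK v hvK z' hz' (Ne.symm hne) hmem
      by_cases hpath : fpath (gs G s) (hset G s K v)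
      · exact ⟨K, hKs, hKclq, hK3, v, hvK, hwnot, hKmemH, hpath⟩
      · have hfin : (hset G s K v).Finite := Set.toFinite _
        set s' := hfin.toFinset with hs'def
        have hs' : (↑s' : Set W) = hset G s K v := Set.Finite.coe_toFinset hfin
        have hvs' : v ∈ s' := by
          rw [hs'def, Set.Finite.mem_toFinset]
          exact hset_self v
        have hsub : s' ⊆ s := by
          intro u hu
          have hu' : u ∈ hset G s K v := by rw [← hs']; exact_mod_cast hu
          exact Finset.mem_coe.mp (hset_sub (hKs hvK) hu')
        have hvstar_not : vstar ∉ s' := by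
          intro hmem
          have hm : vstar ∈ hset G s K v := by rw [← hs']; exact_mod_cast hmem
          exact hsepK v hvK vstar hvstarK hvne hm
        have hcard' : s'.card ≤ N := by
          have h1 : s'.card < s.card :=
            Finset.card_lt_card ⟨hsub, fun hsu => hvstar_not (hsu (hKs hvstarK))⟩
          omega
        have hconn' := conn_hset G hs'
        have hstar' := star_hset G hstar hKs hsepK hvK hs'
        have hnp' : ¬ fpath (gs G s') ↑s' := by
          intro hp
          apply hpath
          rw [← hs']
          refine fpath_congr ?_ hp
          intro u hu t ht
          constructor
          · intro h
            exact gs_adj.mpr ⟨(gs_adj.mp h).1, hsub (gs_adj.mp h).2.1, hsub (gs_adj.mp h).2.2⟩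
          · intro h
            exact gs_adj.mpr ⟨(gs_adj.mp h).1, Finset.mem_coe.mp hu, Finset.mem_coe.mp ht⟩
        obtain ⟨K'', hK''s, hK''clq, hK''3, v'', hv''K, hv''not, hK''memH, hv''path⟩ :=
          ihN s' hcard' hconn' hstar' v hvs' hnp'
        have hseteq : hset G s K'' v'' = hset G s' K'' v'' := by
          apply Set.Subset.antisymm
          · intro u hu
            refine reach_closed (P := hset G s' K'' v'') ?_ (hset_self v'') hu
            intro p hp t ht
            have hps' : p ∈ s' := Finset.mem_coe.mp (hset_sub (hK''s hv''K) hp)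
            have hph : p ∈ hset G s K v := by rw [← hs']; exact_mod_cast hps'
            have hpnev : p ≠ v := by
              intro h
              rw [h] at hp
              exact hv''not hp
            have hpK : p ∉ K := by
              intro hpK
              exact hsepK v hvK p hpK (Ne.symm hpnev) hph
            obtain ⟨hgst, hnotK''⟩ := delk_adj.mp ht
            have hdelK : (delk G s K).Adj p t := delk_adj.mpr ⟨hgst, fun hc => hpK hc.1⟩
            have hth : t ∈ hset G s K v := hset_closed hph hdelK
            have hts' : t ∈ s' := by
              rw [hs'def, Set.Finite.mem_toFinset]
              exact hth
            exact hset_closed hp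
              (delk_adj.mpr ⟨gs_adj.mpr ⟨(gs_adj.mp hgst).1, hps', hts'⟩, hnotK''⟩)
          · intro u hu
            refine reach_mono (fun p t h => ?_) hu
            obtain ⟨h1, h2⟩ := delk_adj.mp h
            exact delk_adj.mpr
              ⟨gs_adj.mpr ⟨(gs_adj.mp h1).1, hsub (gs_adj.mp h1).2.1, hsub (gs_adj.mp h1).2.2⟩,
                h2⟩
        refine ⟨K'', Finset.Subset.trans hK''s hsub, hK''clq, hK''3, v'', hv''K, ?_, ?_, ?_⟩
        · rw [hseteq]
          intro hmem
          have hw' : w₀ ∈ (↑s' : Set W) := hset_sub (hK''s hv''K) hmem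
          rw [hs'] at hw'
          exact hwnot hw'
        · intro z' hz' hmem
          rw [hseteq] at hmem
          exact hK''memH z' hz' hmem
        · rw [hseteq]
          refine fpath_congr ?_ hv''path
          intro u hu t ht
          have hus' : u ∈ s' := Finset.mem_coe.mp (hset_sub (hK''s hv''K) hu)
          have hts' : t ∈ s' := Finset.mem_coe.mp (hset_sub (hK''s hv''K) ht)
          constructor
          · intro h
            exact gs_adj.mpr ⟨(gs_adj.mp h).1, hsub hus', hsub hts'⟩
          · intro h
            exact gs_adj.mpr ⟨(gs_adj.mp h).1, hus', hts'⟩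
    · exfalso
      apply hnp
      have hdeg : deg2 G s := by
        intro x hx u1 u2 u3 h1 h2 h3
        by_contra hc
        push_neg at hc
        obtain ⟨h12, h13, h23⟩ := hc
        obtain ⟨A, B, hdisj, hcA, hcB, hcross, hiff⟩ := hstar x hx
        have m1 := (hiff u1).mp h1
        have m2 := (hiff u2).mp h2
        have m3 := (hiff u3).mp h3
        have hpair : ∃ a b, ((gs G s).Adj x a) ∧ ((gs G s).Adj x b) ∧ a ≠ b ∧ G.Adj a b := by
          rcases m1 with hA1 | hB1 <;> rcases m2 with hA2 | hB2 <;> rcases m3 with hA3 | hB3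
          · exact ⟨u1, u2, h1, h2, h12, hcA u1 hA1 u2 hA2 h12⟩
          · exact ⟨u1, u2, h1, h2, h12, hcA u1 hA1 u2 hA2 h12⟩
          · exact ⟨u1, u3, h1, h3, h13, hcA u1 hA1 u3 hA3 h13⟩
          · exact ⟨u2, u3, h2, h3, h23, hcB u2 hB2 u3 hB3 h23⟩
          · exact ⟨u2, u3, h2, h3, h23, hcA u2 hA2 u3 hA3 h23⟩
          · exact ⟨u1, u3, h1, h3, h13, hcB u1 hB1 u3 hB3 h13⟩
          · exact ⟨u1, u2, h1, h2, h12, hcB u1 hB1 u2 hB2 h12⟩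
          · exact ⟨u1, u2, h1, h2, h12, hcB u1 hB1 u2 hB2 h12⟩
        obtain ⟨a, b, hxa, hxb, hab, hGab⟩ := hpair
        exact htri ⟨x, a, b, hxa,
          gs_adj.mpr ⟨hGab, (gs_adj.mp hxa).2.2, (gs_adj.mp hxb).2.2⟩, hxb⟩
      exact pc G hf s ⟨w₀, hw₀⟩ hconn hdeg htri


end Aux


lemma hasArrow_symm {m : ℕ} {Z : CQ V} (hZ : IsColoredQuiver m Z) {a b : V}
    (h : HasArrow m Z a b) : HasArrow m Z b a := by
  obtain ⟨c, hc, hne⟩ := h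
  refine ⟨m - c, by omega, ?_⟩
  rw [← hZ.skew a b c hc]
  exact hne

/-- if the quiver `Q_w` attached to a peripheral vertex `w` of a
quiver in `𝒬ᵐ_{p,q}` is not of type `A_{n_w}`, then it contains a clique that
is almost extremal in `Q_w ∪ D` and in `Q`. -/
theorem stmt3 {V : Type*} [Fintype V] (m p q : ℕ) (hm : 1 ≤ m) (hp : 1 ≤ p)
    (hq : 1 ≤ q) (Q : CQ V) (d : QpqData m p q Q) (w : V)
    (hw : w ∉ Set.range d.a) (i : Fin d.l) (hwD : w ∈ d.D i)
    (hnotA : ¬ IsTypeA m (d.nw w) (CQ.restrict d.Del (d.comp w))) :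
    ∃ C : Finset V, ↑C ⊆ d.comp w ∧ IsClique m d.Del C ∧
      AlmostExtremal m (keepArrows Q (d.comp w ∪ ↑(d.D i))) C ∧
      AlmostExtremal m Q C := by
  classical
  set S : Set V := d.comp w with hSdef
  have hwS : w ∈ S := SimpleGraph.Reachable.refl w
  have hQA : ClassQA m (d.nw w) (CQ.restrict d.Del S) := d.QwClass w hw ⟨i, hwD⟩
  obtain ⟨hcol, hsimp, hcardS, hconn0, hhf, hvc, hadm⟩ := hQA
  haveI : Finite ↥S := Subtype.finite
  haveI : Fintype ↥S := Fintype.ofFinite ↥S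
  -- skew-symmetry of Del
  have hDelCol : IsColoredQuiver m d.Del := by
    obtain ⟨hb, hl, hmo, hsk⟩ := d.colored
    refine ⟨?_, ?_, ?_, ?_⟩
    · intro a b c hc
      simp only [d.hDel]
      split_ifs
      · rfl
      · exact hb a b c hc
    · intro a c
      simp only [d.hDel]
      split_ifs
      · rfl
      · exact hl a c
    · intro a b c c' hne hcc
      simp only [d.hDel] at hne ⊢
      split_ifs at hne ⊢ with h
      · rfl
      · exact hmo a b c c' hne hcc
    · intro a b c hc
      simp only [d.hDel]
      by_cases h : ∃ t, a ∈ d.D t ∧ b ∈ d.D t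
      · rw [if_pos h, if_pos (by obtain ⟨t, h1, h2⟩ := h; exact ⟨t, h2, h1⟩)]
      · rw [if_neg h, if_neg (by rintro ⟨t, h1, h2⟩; exact h ⟨t, h2, h1⟩)]
        exact hsk a b c hc
  -- adjacency characterisation of the restricted underlying graph
  have hGadj : ∀ a b : ↥S, (underlying m (CQ.restrict d.Del S)).Adj a b ↔
      ((a : V) ≠ (b : V) ∧ (HasArrow m d.Del ↑a ↑b ∨ HasArrow m d.Del ↑b ↑a)) := by
    intro a b
    constructor
    · rintro ⟨hne, h⟩
      exact ⟨fun hh => hne (Subtype.ext hh), h⟩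
    · rintro ⟨hne, h⟩
      exact ⟨fun hh => hne (congrArg Subtype.val hh), h⟩
  -- vertices of S other than w lie in no boundary clique
  have hlast : ∀ x : V, x ∈ S → x ≠ w → ∃ z, (underlying m d.Del).Adj z x := by
    intro x hx hxw
    have hre : (underlying m d.Del).Reachable w x := hx
    obtain ⟨pwalk⟩ := hre
    cases hrev : pwalk.reverse with
    | nil => exact absurd rfl (Ne.symm hxw)
    | cons h q' => exact ⟨_, h.symm⟩
  have hnotD : ∀ x : V, x ∈ S → x ≠ w → ∀ j : Fin d.l, x ∉ d.D j := by
    intro x hx hxw j hxD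
    by_cases hxa : x ∈ Set.range d.a
    · obtain ⟨t, rfl⟩ := hxa
      obtain ⟨z, hz⟩ := hlast _ hx hxw
      exact d.central_isolated t z hz.symm
    · exact d.periph_disj w x hw hxa ⟨i, hwD⟩ ⟨j, hxD⟩ (Ne.symm hxw) hx
  have harr : ∀ x : V, x ∈ S → x ≠ w → ∀ y c, d.Del x y c = Q x y c ∧ d.Del y x c = Q y x c := by
    intro x hx hxw y c
    constructor
    · simp only [d.hDel]
      rw [if_neg]
      rintro ⟨t, h1, _⟩
      exact hnotD x hx hxw t h1
    · simp only [d.hDel]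
      rw [if_neg]
      rintro ⟨t, _, h2⟩
      exact hnotD x hx hxw t h2
  have hAdjS : ∀ x : V, x ∈ S → ∀ y, (underlying m d.Del).Adj x y → y ∈ S := by
    intro x hx y hadj
    exact SimpleGraph.Reachable.trans hx hadj.reachable
  -- translation between gs-univ and G
  have hgs_univ : ∀ a b : ↥S,
      (Aux.gs (underlying m (CQ.restrict d.Del S)) Finset.univ).Adj a b ↔
      (underlying m (CQ.restrict d.Del S)).Adj a b := by
    intro a b
    rw [Aux.gs_adj]
    simp
  have hconnU : ∀ x ∈ (Finset.univ : Finset ↥S), ∀ y ∈ (Finset.univ : Finset ↥S),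
      Aux.reach (Aux.gs (underlying m (CQ.restrict d.Del S)) Finset.univ) x y := by
    intro x _ y _
    have hre : (underlying m (CQ.restrict d.Del S)).Reachable x y := hconn0.preconnected x y
    exact Aux.reach_mono (fun a b h => (hgs_univ a b).mpr h) (Aux.reachable_reach hre)
  -- the star property on the whole of S
  have hstarU : Aux.star (underlying m (CQ.restrict d.Del S)) Finset.univ := by
    intro x _
    by_cases h3 : ∃ u1 u2 u3 : ↥S, (underlying m (CQ.restrict d.Del S)).Adj x u1 ∧
        (underlying m (CQ.restrict d.Del S)).Adj x u2 ∧
        (underlying m (CQ.restrict d.Del S)).Adj x u3 ∧ u1 ≠ u2 ∧ u1 ≠ u3 ∧ u2 ≠ u3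
    · obtain ⟨u1, u2, u3, ha1, ha2, ha3, h12, h13, h23⟩ := h3
      have hdeg3 : 3 ≤ deg m (CQ.restrict d.Del S) x := by
        have hsub : ({u1, u2, u3} : Set ↥S) ⊆
            {u | (underlying m (CQ.restrict d.Del S)).Adj x u} := by
          intro u hu
          simp only [Set.mem_insert_iff, Set.mem_singleton_iff] at hu
          rcases hu with rfl | rfl | rfl
          · exact ha1
          · exact ha2
          · exact ha3
        have h33 : ({u1, u2, u3} : Set ↥S).ncard = 3 :=
          Set.ncard_eq_three.mpr ⟨u1, u2, u3, h12, h13, h23, rfl⟩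
        calc (3 : ℕ) = ({u1, u2, u3} : Set ↥S).ncard := h33.symm
          _ ≤ _ := Set.ncard_le_ncard hsub (Set.toFinite _)
      obtain ⟨Cr, Bk, hCr, hBk, hxCr, hxBk, hsum, hCrle, hBkle, hcross0⟩ := hvc x (by omega)
      have hdisj : Disjoint (Cr.erase x) (Bk.erase x) := by
        rw [Finset.disjoint_left]
        intro u huA huB
        obtain ⟨hune, huCr⟩ := Finset.mem_erase.mp huA
        obtain ⟨_, huBk⟩ := Finset.mem_erase.mp huB
        have hBk2 : Bk ⊆ {x, u} := by
          intro b hb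
          by_contra hbne
          simp only [Finset.mem_insert, Finset.mem_singleton, not_or] at hbne
          exact hcross0 u huCr b hb hune hbne.1 (hBk u huBk b hb (fun h => hbne.2 h.symm))
        have hCr2 : Cr ⊆ {x, u} := by
          intro b hb
          by_contra hbne
          simp only [Finset.mem_insert, Finset.mem_singleton, not_or] at hbne
          exact hcross0 b hb u huBk hbne.1 hune (hCr b hb u huCr hbne.2)
        have hxu2 : ({x, u} : Finset ↥S).card ≤ 2 := by
          apply le_trans (Finset.card_insert_le _ _)
          simp
        have hc1 : Cr.card ≤ 2 := le_trans (Finset.card_le_card hCr2) hxu2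
        have hc2 : Bk.card ≤ 2 := le_trans (Finset.card_le_card hBk2) hxu2
        omega
      have hABeq : ((Cr.erase x ∪ Bk.erase x : Finset ↥S) : Set ↥S) =
          {u | (underlying m (CQ.restrict d.Del S)).Adj x u} := by
        refine Set.eq_of_subset_of_ncard_le ?_ ?_ (Set.toFinite _)
        · intro u hu
          rw [Finset.coe_union, Set.mem_union] at hu
          rcases hu with hu | hu
          · obtain ⟨hune, huCr⟩ := Finset.mem_erase.mp (Finset.mem_coe.mp hu)
            exact ⟨Ne.symm hune, Or.inl (hCr x hxCr u huCr (Ne.symm hune))⟩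
          · obtain ⟨hune, huBk⟩ := Finset.mem_erase.mp (Finset.mem_coe.mp hu)
            exact ⟨Ne.symm hune, Or.inl (hBk x hxBk u huBk (Ne.symm hune))⟩
        · rw [Set.ncard_coe_finset, Finset.card_union_of_disjoint hdisj,
            Finset.card_erase_of_mem hxCr, Finset.card_erase_of_mem hxBk]
          have hCrpos : 1 ≤ Cr.card := Finset.card_pos.mpr ⟨x, hxCr⟩
          have hBkpos : 1 ≤ Bk.card := Finset.card_pos.mpr ⟨x, hxBk⟩
          have hdeg : {u | (underlying m (CQ.restrict d.Del S)).Adj x u}.ncard =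
              deg m (CQ.restrict d.Del S) x := rfl
          omega
      refine ⟨Cr.erase x, Bk.erase x, hdisj, ?_, ?_, ?_, ?_⟩
      · intro a ha b hb hab
        exact ⟨hab, Or.inl (hCr a (Finset.mem_erase.mp ha).2 b (Finset.mem_erase.mp hb).2 hab)⟩
      · intro a ha b hb hab
        exact ⟨hab, Or.inl (hBk a (Finset.mem_erase.mp ha).2 b (Finset.mem_erase.mp hb).2 hab)⟩
      · intro a ha b hb hadj
        obtain ⟨hane, haCr⟩ := Finset.mem_erase.mp ha
        obtain ⟨hbne, hbBk⟩ := Finset.mem_erase.mp hb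
        rcases hadj.2 with h | h
        · exact hcross0 a haCr b hbBk hane hbne h
        · exact hcross0 a haCr b hbBk hane hbne (hasArrow_symm hcol h)
      · intro u
        constructor
        · intro hadj
          have hmem : u ∈ {u | (underlying m (CQ.restrict d.Del S)).Adj x u} :=
            (hgs_univ x u).mp hadj
          rw [← hABeq] at hmem
          rw [Finset.coe_union, Set.mem_union, Finset.mem_coe, Finset.mem_coe] at hmem
          exact hmem
        · intro hu
          apply (hgs_univ x u).mpr
          have hmem : u ∈ ((Cr.erase x ∪ Bk.erase x : Finset ↥S) : Set ↥S) := by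
            rw [Finset.coe_union, Set.mem_union, Finset.mem_coe, Finset.mem_coe]
            exact hu
          rw [hABeq] at hmem
          exact hmem
    · push_neg at h3
      by_cases h1 : ∃ u : ↥S, (underlying m (CQ.restrict d.Del S)).Adj x u
      · obtain ⟨u1, hu1⟩ := h1
        by_cases h2 : ∃ u : ↥S, (underlying m (CQ.restrict d.Del S)).Adj x u ∧ u ≠ u1
        · obtain ⟨u2, hu2, hne21⟩ := h2
          have hcover : ∀ u, (underlying m (CQ.restrict d.Del S)).Adj x u →
              u = u1 ∨ u = u2 := by
            intro u hu
            by_contra hcu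
            push_neg at hcu
            exact hcu.2 (h3 u1 u2 u hu1 hu2 hu (Ne.symm hne21) (fun h => hcu.1 h.symm)).symm
          by_cases hadj12 : (underlying m (CQ.restrict d.Del S)).Adj u1 u2
          · refine ⟨{u1, u2}, ∅, Finset.disjoint_empty_right _, ?_, ?_, ?_, ?_⟩
            · intro a ha b hb hab
              simp only [Finset.mem_insert, Finset.mem_singleton] at ha hb
              rcases ha with rfl | rfl <;> rcases hb with rfl | rfl
              · exact absurd rfl hab
              · exact hadj12
              · exact hadj12.symm
              · exact absurd rfl hab
            · intro a ha b hb hab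
              exact absurd ha (Finset.notMem_empty a)
            · intro a ha b hb
              exact absurd hb (Finset.notMem_empty b)
            · intro u
              constructor
              · intro hadj
                rcases hcover u ((hgs_univ x u).mp hadj) with rfl | rfl
                · simp
                · simp
              · intro hu
                simp only [Finset.mem_insert, Finset.mem_singleton,
                  Finset.notMem_empty, or_false] at hu
                rcases hu with rfl | rfl
                · exact (hgs_univ _ _).mpr hu1
                · exact (hgs_univ _ _).mpr hu2
          · refine ⟨{u1}, {u2}, ?_, ?_, ?_, ?_, ?_⟩
            · rw [Finset.disjoint_left]
              intro a ha hb
              simp only [Finset.mem_singleton] at ha hb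
              rw [ha] at hb
              exact hne21 hb.symm
            · intro a ha b hb hab
              simp only [Finset.mem_singleton] at ha hb
              rw [ha, hb] at hab
              exact absurd rfl hab
            · intro a ha b hb hab
              simp only [Finset.mem_singleton] at ha hb
              rw [ha, hb] at hab
              exact absurd rfl hab
            · intro a ha b hb hadj
              simp only [Finset.mem_singleton] at ha hb
              rw [ha, hb] at hadj
              exact hadj12 hadj
            · intro u
              constructor
              · intro hadj
                rcases hcover u ((hgs_univ x u).mp hadj) with rfl | rfl
                · simp
                · simp
              · intro hu
                simp only [Finset.mem_singleton] at hu
                rcases hu with rfl | rfl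
                · exact (hgs_univ _ _).mpr hu1
                · exact (hgs_univ _ _).mpr hu2
        · push_neg at h2
          refine ⟨{u1}, ∅, Finset.disjoint_empty_right _, ?_, ?_, ?_, ?_⟩
          · intro a ha b hb hab
            simp only [Finset.mem_singleton] at ha hb
            rw [ha, hb] at hab
            exact absurd rfl hab
          · intro a ha b hb hab
            exact absurd ha (Finset.notMem_empty a)
          · intro a ha b hb
            exact absurd hb (Finset.notMem_empty b)
          · intro u
            constructor
            · intro hadj
              have hu := h2 u ((hgs_univ x u).mp hadj)
              simp [hu]
            · intro hu
              simp only [Finset.mem_singleton, Finset.notMem_empty, or_false] at hu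
              rw [hu]
              exact (hgs_univ _ _).mpr hu1
      · push_neg at h1
        refine ⟨∅, ∅, Finset.disjoint_empty_right _, ?_, ?_, ?_, ?_⟩
        · intro a ha b hb hab
          exact absurd ha (Finset.notMem_empty a)
        · intro a ha b hb hab
          exact absurd ha (Finset.notMem_empty a)
        · intro a ha b hb
          exact absurd ha (Finset.notMem_empty a)
        · intro u
          constructor
          · intro hadj
            exact absurd ((hgs_univ x u).mp hadj) (h1 u)
          · intro hu
            simp at hu
  -- not a path
  have hnp : ¬ Aux.fpath (Aux.gs (underlying m (CQ.restrict d.Del S)) Finset.univ)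
      ↑(Finset.univ : Finset ↥S) := by
    rintro ⟨n, f, hn1, hinj, hcov, hadj⟩
    apply hnotA
    have hbij : Function.Bijective (fun t : Fin n => f ↑t) := by
      constructor
      · intro a b hab
        exact Fin.val_injective (hinj ↑a a.isLt ↑b b.isLt hab)
      · intro u
        obtain ⟨t, ht, hft⟩ := (hcov u).mp (by simp)
        exact ⟨⟨t, ht⟩, hft⟩
    have hn : n = d.nw w := by
      have h1 : Nat.card ↥S = d.nw w := by
        rw [d.hnw]
        exact Nat.card_coe_set_eq S
      have h2 : Nat.card (Fin n) = Nat.card ↥S := Nat.card_congr (Equiv.ofBijective _ hbij)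
      rw [Nat.card_eq_fintype_card, Fintype.card_fin] at h2
      rw [h2, h1]
    subst hn
    refine ⟨Equiv.ofBijective _ hbij, ?_⟩
    intro a b
    have hiff := hadj ↑a a.isLt ↑b b.isLt
    constructor
    · intro h
      exact hiff.mp ((hgs_univ _ _).mpr h)
    · intro h
      exact (hgs_univ _ _).mp (hiff.mpr h)
  -- main combinatorial lemma
  obtain ⟨K, hKuniv, hKclq, hK3, v, hvK, hwnotH, hKH, hHpath⟩ :=
    Aux.main (underlying m (CQ.restrict d.Del S)) hhf (Finset.univ : Finset ↥S).card
      Finset.univ le_rfl hconnU hstarU ⟨w, hwS⟩ (Finset.mem_univ _) hnp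
  -- the clique C in V
  set C : Finset V := K.image Subtype.val with hCdef
  have hmemC : ∀ y : V, y ∈ C ↔ ∃ hy : y ∈ S, (⟨y, hy⟩ : ↥S) ∈ K := by
    intro y
    rw [hCdef, Finset.mem_image]
    constructor
    · rintro ⟨a, ha, rfl⟩
      exact ⟨a.2, by simpa using ha⟩
    · rintro ⟨hy, hK⟩
      exact ⟨⟨y, hy⟩, hK, rfl⟩
  have hCsub : (↑C : Set V) ⊆ S := by
    intro y hy
    obtain ⟨hyS, _⟩ := (hmemC y).mp (Finset.mem_coe.mp hy)
    exact hyS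
  have hCcard : 3 ≤ C.card := by
    rw [hCdef, Finset.card_image_of_injective _ Subtype.val_injective]
    exact hK3
  have hHS : ∀ xs : ↥S,
      xs ∈ Aux.hset (underlying m (CQ.restrict d.Del S)) Finset.univ K v → (↑xs : V) ≠ w := by
    intro xs hxs hcon
    apply hwnotH
    have hx : xs = ⟨w, hwS⟩ := Subtype.ext hcon
    rw [← hx]
    exact hxs
  have hvH : v ∈ Aux.hset (underlying m (CQ.restrict d.Del S)) Finset.univ K v :=
    Aux.hset_self v
  have hCliqueDel : IsClique m d.Del C := by
    intro a ha b hb hab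
    obtain ⟨haS, haK⟩ := (hmemC a).mp ha
    obtain ⟨hbS, hbK⟩ := (hmemC b).mp hb
    have hadj := hKclq _ haK _ hbK (fun h => hab (congrArg Subtype.val h))
    rcases ((hGadj _ _).mp hadj).2 with h | h
    · exact h
    · exact hasArrow_symm hDelCol h
  -- keepArrows agrees with Q where needed
  set U : Set V := d.comp w ∪ ↑(d.D i) with hUdef
  have hkeep : ∀ x : V, x ∈ S → x ≠ w → ∀ y c, keepArrows Q U x y c = Q x y c ∧
      keepArrows Q U y x c = Q y x c := by
    intro x hx hxw y c
    have hxU : x ∈ U := Set.mem_union_left _ hx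
    have hQ0 : y ∉ U → Q x y c = 0 ∧ Q y x c = 0 := by
      intro hz
      by_cases hcm : c ≤ m
      · constructor
        · by_contra h0
          have hDel : d.Del x y c ≠ 0 := by
            rw [(harr x hx hxw y c).1]
            exact h0
          have hne : x ≠ y := by
            intro hxz
            rw [← hxz] at hDel
            exact hDel (hDelCol.noLoops x c)
          have hadj : (underlying m d.Del).Adj x y := ⟨hne, Or.inl ⟨c, hcm, hDel⟩⟩
          exact hz (Set.mem_union_left _ (hAdjS x hx y hadj))
        · by_contra h0
          have hDel : d.Del y x c ≠ 0 := by
            rw [(harr x hx hxw y c).2]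
            exact h0
          have hne : x ≠ y := by
            intro hxz
            rw [← hxz] at hDel
            exact hDel (hDelCol.noLoops x c)
          have hadj : (underlying m d.Del).Adj x y := ⟨hne, Or.inr ⟨c, hcm, hDel⟩⟩
          exact hz (Set.mem_union_left _ (hAdjS x hx y hadj))
      · exact ⟨d.colored.colorBound x y c (by omega), d.colored.colorBound y x c (by omega)⟩
    constructor
    · simp only [keepArrows]
      by_cases hy : y ∈ U
      · rw [if_pos ⟨hxU, hy⟩]
      · rw [if_neg (fun hc => hy hc.2), (hQ0 hy).1]
    · simp only [keepArrows]
      by_cases hy : y ∈ U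
      · rw [if_pos ⟨hy, hxU⟩]
      · rw [if_neg (fun hc => hy hc.1), (hQ0 hy).2]
  -- generic transfer
  have htransfer : ∀ Y : CQ V,
      (∀ x y c, ((x ∈ S ∧ x ≠ w) ∨ (y ∈ S ∧ y ≠ w) ∨ (x ∈ S ∧ y ∈ S)) → Y x y c = Q x y c) →
      AlmostExtremal m Y C := by
    intro Y hY
    have hCliqueY : IsClique m Y C := by
      intro a ha b hb hab
      obtain ⟨c, hc, hne⟩ := hCliqueDel a ha b hb hab
      refine ⟨c, hc, ?_⟩
      rw [hY a b c (Or.inr (Or.inr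
        ⟨hCsub (Finset.mem_coe.mpr ha), hCsub (Finset.mem_coe.mpr hb)⟩))]
      intro h0
      apply hne
      simp only [d.hDel]
      split_ifs
      · rfl
      · exact h0
    have hedgeiff : ∀ xs : ↥S,
        xs ∈ Aux.hset (underlying m (CQ.restrict d.Del S)) Finset.univ K v →
        ∀ y : V, ((underlying m (delCliqueArrows Y C)).Adj ↑xs y ↔
          ∃ hy : y ∈ S,
            (Aux.delk (underlying m (CQ.restrict d.Del S)) Finset.univ K).Adj xs ⟨y, hy⟩) := by
      intro xs hxs y
      have hxS : (↑xs : V) ∈ S := xs.2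
      have hxw : (↑xs : V) ≠ w := hHS xs hxs
      constructor
      · rintro ⟨hne, harrow⟩
        have hKey : (¬ ((↑xs : V) ∈ C ∧ y ∈ C)) ∧
            (HasArrow m d.Del ↑xs y ∨ HasArrow m d.Del y ↑xs) := by
          rcases harrow with ⟨c, hc, h0⟩ | ⟨c, hc, h0⟩
          · have h0' : (if (↑xs : V) ∈ C ∧ y ∈ C then 0 else Y ↑xs y c) ≠ 0 := h0
            by_cases hcc : (↑xs : V) ∈ C ∧ y ∈ C
            · rw [if_pos hcc] at h0'
              exact absurd rfl h0'
            · rw [if_neg hcc, hY ↑xs y c (Or.inl ⟨hxS, hxw⟩)] at h0'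
              refine ⟨hcc, Or.inl ⟨c, hc, ?_⟩⟩
              rw [(harr ↑xs hxS hxw y c).1]
              exact h0'
          · have h0' : (if y ∈ C ∧ (↑xs : V) ∈ C then 0 else Y y ↑xs c) ≠ 0 := h0
            by_cases hcc : y ∈ C ∧ (↑xs : V) ∈ C
            · rw [if_pos hcc] at h0'
              exact absurd rfl h0'
            · rw [if_neg hcc, hY y ↑xs c (Or.inr (Or.inl ⟨hxS, hxw⟩))] at h0'
              refine ⟨fun hc2 => hcc ⟨hc2.2, hc2.1⟩, Or.inr ⟨c, hc, ?_⟩⟩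
              rw [(harr ↑xs hxS hxw y c).2]
              exact h0'
        obtain ⟨hnotC, hDarr⟩ := hKey
        have hadjDel : (underlying m d.Del).Adj ↑xs y := ⟨hne, hDarr⟩
        have hyS : y ∈ S := hAdjS ↑xs hxS y hadjDel
        refine ⟨hyS, Aux.delk_adj.mpr
          ⟨Aux.gs_adj.mpr ⟨?_, Finset.mem_univ _, Finset.mem_univ _⟩, ?_⟩⟩
        · exact (hGadj xs ⟨y, hyS⟩).mpr ⟨hne, hDarr⟩
        · rintro ⟨h1, h2⟩
          exact hnotC ⟨(hmemC ↑xs).mpr ⟨hxS, by simpa using h1⟩, (hmemC y).mpr ⟨hyS, h2⟩⟩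
      · rintro ⟨hy, hdadj⟩
        obtain ⟨hgadj, hnotK⟩ := Aux.delk_adj.mp hdadj
        obtain ⟨hne, hDarr⟩ := (hGadj xs ⟨y, hy⟩).mp (Aux.gs_adj.mp hgadj).1
        have hnotC : ¬ ((↑xs : V) ∈ C ∧ y ∈ C) := by
          rintro ⟨h1, h2⟩
          obtain ⟨hxS', hxK⟩ := (hmemC ↑xs).mp h1
          obtain ⟨hyS', hyK⟩ := (hmemC y).mp h2
          apply hnotK
          constructor
          · have hx : (⟨↑xs, hxS'⟩ : ↥S) = xs := Subtype.ext rfl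
            rw [← hx]
            exact hxK
          · exact hyK
        refine ⟨hne, ?_⟩
        rcases hDarr with ⟨c, hc, h0⟩ | ⟨c, hc, h0⟩
        · left
          refine ⟨c, hc, ?_⟩
          show (if (↑xs : V) ∈ C ∧ y ∈ C then 0 else Y ↑xs y c) ≠ 0
          rw [if_neg hnotC, hY ↑xs y c (Or.inl ⟨hxS, hxw⟩), ← (harr ↑xs hxS hxw y c).1]
          exact h0
        · right
          refine ⟨c, hc, ?_⟩
          show (if y ∈ C ∧ (↑xs : V) ∈ C then 0 else Y y ↑xs c) ≠ 0
          rw [if_neg (fun hc2 => hnotC ⟨hc2.2, hc2.1⟩),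
            hY y ↑xs c (Or.inr (Or.inl ⟨hxS, hxw⟩)), ← (harr ↑xs hxS hxw y c).2]
          exact h0
    have hTP : {u : V | (underlying m (delCliqueArrows Y C)).Reachable ↑v u} =
        Subtype.val '' (Aux.hset (underlying m (CQ.restrict d.Del S)) Finset.univ K v) := by
      apply Set.Subset.antisymm
      · intro u hu
        have hu' : (underlying m (delCliqueArrows Y C)).Reachable ↑v u := hu
        refine Aux.reach_closed (P := Subtype.val '' _) ?_ ⟨v, hvH, rfl⟩
          (Aux.reachable_reach hu')
        rintro p ⟨ps, hpsH, rfl⟩ t ht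
        obtain ⟨hty, htadj⟩ := (hedgeiff ps hpsH t).mp ht
        exact ⟨⟨t, hty⟩, Aux.hset_closed hpsH htadj, rfl⟩
      · rintro u ⟨us, husH, rfl⟩
        obtain ⟨n', f, h0, h1, h2⟩ := husH
        have key : ∀ t, t ≤ n' →
            f t ∈ Aux.hset (underlying m (CQ.restrict d.Del S)) Finset.univ K v ∧
            (underlying m (delCliqueArrows Y C)).Reachable ↑v ↑(f t) := by
          intro t
          induction t with
          | zero =>
            intro _
            rw [h0]
            exact ⟨Aux.hset_self v, SimpleGraph.Reachable.refl _⟩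
          | succ r ihr =>
            intro hr
            obtain ⟨hmem, hre⟩ := ihr (by omega)
            have hadj := h2 r (by omega)
            refine ⟨Aux.hset_closed hmem hadj, hre.trans (SimpleGraph.Adj.reachable ?_)⟩
            exact (hedgeiff (f r) hmem ↑(f (r + 1))).mpr ⟨(f (r + 1)).2, hadj⟩
        have hfin := (key n' le_rfl).2
        rw [h1] at hfin
        exact hfin
    obtain ⟨n, fH, hn1, hinjH, hcovH, hadjH⟩ := hHpath
    have hmemH : ∀ t, t < n →
        fH t ∈ Aux.hset (underlying m (CQ.restrict d.Del S)) Finset.univ K v :=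
      fun t ht => (hcovH (fH t)).mpr ⟨t, ht, rfl⟩
    refine ⟨hCliqueY, hCcard, ↑v, n, hn1, ?_⟩
    have hmemT : ∀ t : Fin n, (↑(fH ↑t) : V) ∈
        {u : V | (underlying m (delCliqueArrows Y C)).Reachable ↑v u} := by
      intro t
      rw [hTP]
      exact ⟨fH ↑t, hmemH ↑t t.isLt, rfl⟩
    have hbij : Function.Bijective
        (fun t : Fin n => (⟨↑(fH ↑t), hmemT t⟩ :
          {u : V // (underlying m (delCliqueArrows Y C)).Reachable ↑v u})) := by
      constructor
      · intro a b hab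
        apply Fin.val_injective
        apply hinjH ↑a a.isLt ↑b b.isLt
        apply Subtype.ext
        exact congrArg
          (fun z : {u : V // (underlying m (delCliqueArrows Y C)).Reachable ↑v u} => z.val) hab
      · rintro ⟨u, hu⟩
        have hu' : u ∈ Subtype.val ''
            (Aux.hset (underlying m (CQ.restrict d.Del S)) Finset.univ K v) := by
          rw [← hTP]
          exact hu
        obtain ⟨us, husH, rfl⟩ := hu'
        obtain ⟨t, ht, hft⟩ := (hcovH us).mp husH
        refine ⟨⟨t, ht⟩, Subtype.ext ?_⟩
        show (↑(fH t) : V) = ↑us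
        rw [hft]
    have hZadj : ∀ a b : Fin n,
        ((underlying m (delCliqueArrows Y C)).Adj ↑(fH ↑a) ↑(fH ↑b) ↔
        ((↑b : ℕ) = ↑a + 1 ∨ (↑a : ℕ) = ↑b + 1)) := by
      intro a b
      constructor
      · intro h
        obtain ⟨hy, hdadj⟩ := (hedgeiff (fH ↑a) (hmemH ↑a a.isLt) ↑(fH ↑b)).mp h
        have hdadj' : (Aux.delk (underlying m (CQ.restrict d.Del S)) Finset.univ K).Adj
            (fH ↑a) (fH ↑b) := hdadj
        exact (hadjH ↑a a.isLt ↑b b.isLt).mp (Aux.delk_adj.mp hdadj').1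
      · intro h
        have hgs := (hadjH ↑a a.isLt ↑b b.isLt).mpr h
        have hnb : ¬ (fH ↑a ∈ K ∧ fH ↑b ∈ K) := by
          rintro ⟨hh1, hh2⟩
          have e1 := hKH _ hh1 (hmemH ↑a a.isLt)
          have e2 := hKH _ hh2 (hmemH ↑b b.isLt)
          rw [e1, e2] at hgs
          exact (Aux.gs _ _).loopless.irrefl _ hgs
        exact (hedgeiff (fH ↑a) (hmemH ↑a a.isLt) ↑(fH ↑b)).mpr
          ⟨(fH ↑b).2, Aux.delk_adj.mpr ⟨hgs, hnb⟩⟩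
    refine ⟨Equiv.ofBijective _ hbij, ?_⟩
    intro a b
    constructor
    · rintro ⟨hne, harrow⟩
      exact (hZadj a b).mp ⟨fun hh => hne (Subtype.ext hh), harrow⟩
    · intro h
      obtain ⟨hne, harrow⟩ := (hZadj a b).mpr h
      exact ⟨fun hh => hne (congrArg
        (fun z : {u : V // (underlying m (delCliqueArrows Y C)).Reachable ↑v u} => z.val) hh),
        harrow⟩
  refine ⟨C, hCsub, hCliqueDel, ?_, ?_⟩
  · refine htransfer (keepArrows Q U) ?_
    intro x y c hcase
    rcases hcase with ⟨hx, hxw⟩ | ⟨hy, hyw⟩ | ⟨hx, hy⟩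
    · exact (hkeep x hx hxw y c).1
    · exact (hkeep y hy hyw x c).2
    · simp only [keepArrows]
      rw [if_pos ⟨Set.mem_union_left _ hx, Set.mem_union_left _ hy⟩]
  · exact htransfer Q (fun _ _ _ _ => rfl)

end CM
end

section
/- Let m ≥ 1 and let c₁, c₂ be colors with 0 ≤ c₁ < c₂ ≤ m. Let Q be the simple m-colored quiver on the three vertices v, u₁, u₂ whose only arrows are v →^{(c₁)} u₁, v →^{(c₂)} u₂ and u₁ →^{(c₂−c₁)} u₂ (together with their skew-symmetric reverses). Then applying the colored mutation at v exactly m+1 times returns the original quiver: μ_v^{m+1}(Q) = Q. -/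
open Finset

open scoped Classical

namespace CM

variable {V : Type*}

/-- Auxiliary triangle quiver with multiplicity `p` on the `1 → 2` arrow. -/
def tri2 (m a b d p : ℕ) : CQ (Fin 3) := fun i j c =>
  (if i = 0 ∧ j = 1 ∧ c = a then 1 else 0) +
  (if i = 1 ∧ j = 0 ∧ c = m - a then 1 else 0) +
  (if i = 0 ∧ j = 2 ∧ c = b then 1 else 0) +
  (if i = 2 ∧ j = 0 ∧ c = m - b then 1 else 0) +
  (if i = 1 ∧ j = 2 ∧ c = d then p else 0) +
  (if i = 2 ∧ j = 1 ∧ c = m - d then p else 0)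

lemma sum_erase_ind (m c d : ℕ) (p : ℕ) (hd : d ≤ m) :
    ∑ t ∈ (Finset.range (m + 1)).erase c, ((if t = d then p else 0 : ℕ) : ℤ)
      = if d = c then 0 else (p : ℤ) := by
  have h : ∀ t : ℕ, ((if t = d then p else 0 : ℕ) : ℤ) = if t = d then (p : ℤ) else 0 := by
    intro t; split <;> simp
  simp only [h]
  rw [Finset.sum_ite_eq' ((Finset.range (m + 1)).erase c) d fun _ => (p : ℤ)]
  simp only [Finset.mem_erase, Finset.mem_range]
  split_ifs with h1 h2 h2 <;> first | rfl | omega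

lemma succ_mod (m c : ℕ) (hc : c ≤ m) :
    (c + 1) % (m + 1) = if c = m then 0 else c + 1 := by
  split_ifs with h
  · simp [h]
  · exact Nat.mod_eq_of_lt (by omega)

lemma pred_mod (m c : ℕ) (hc : c ≤ m) :
    (c + m) % (m + 1) = if c = 0 then m else c - 1 := by
  split_ifs with h
  · subst h; simpa using Nat.mod_eq_of_lt (by omega)
  · have h2 : c + m = (c - 1) + (m + 1) := by omega
    rw [h2, Nat.add_mod_right]
    exact Nat.mod_eq_of_lt (by omega)

set_option maxHeartbeats 2000000 in
lemma step_mut (m a b d p p' : ℕ) (hm : 1 ≤ m) (hd1 : 1 ≤ d) (hd : d ≤ m)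
    (ha : a ≤ m) (hb : b ≤ m)
    (hrel : b = a + d ∨ b + (m + 1) = a + d)
    (hp : b = 0 → 1 ≤ p)
    (hp' : p' + (if b = 0 then 1 else 0) = p + (if a = 0 then 1 else 0)) :
    mutate m (tri2 m a b d p) 0 =
      tri2 m (if a = m then 0 else a + 1) (if b = m then 0 else b + 1) d p' := by
  funext i j c
  by_cases hc : m < c
  · have h1 : ¬ c = (if a = m then 0 else a + 1) := by split_ifs <;> omega
    have h2 : ¬ c = (if b = m then 0 else b + 1) := by split_ifs <;> omega
    have h3 : ¬ c = m - (if a = m then 0 else a + 1) := by split_ifs <;> omega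
    have h4 : ¬ c = m - (if b = m then 0 else b + 1) := by split_ifs <;> omega
    have h5 : ¬ c = d := by omega
    have h6 : ¬ c = m - d := by omega
    simp [mutate, tri2, hc, h1, h2, h3, h4, h5, h6]
  · push_neg at hc
    have hc2 : ¬ m < c := by omega
    fin_cases i <;> fin_cases j
    · simp [mutate, tri2]
    · -- 0 → 1
      simp only [mutate, tri2, hc2, if_false, Fin.ext_iff, Fin.isValue]
      norm_num
      rw [pred_mod m c hc]
      split_ifs at hp' ⊢ <;> omega
    · -- 0 → 2
      simp only [mutate, tri2, hc2, if_false, Fin.ext_iff, Fin.isValue]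
      norm_num
      rw [pred_mod m c hc]
      split_ifs at hp' ⊢ <;> omega
    · -- 1 → 0
      simp only [mutate, tri2, hc2, if_false, Fin.ext_iff, Fin.isValue]
      norm_num
      rw [succ_mod m c hc]
      split_ifs at hp' ⊢ <;> omega
    · simp [mutate, tri2]
    · -- 1 → 2 : the hard case
      simp only [mutate, tri2, hc2, if_false, Fin.ext_iff, Fin.isValue]
      norm_num
      split_ifs at hp' ⊢ <;> omega
    · -- 2 → 0
      simp only [mutate, tri2, hc2, if_false, Fin.ext_iff, Fin.isValue]
      norm_num
      rw [succ_mod m c hc]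
      split_ifs at hp' ⊢ <;> omega
    · -- 2 → 1 : the other hard case
      simp only [mutate, tri2, hc2, if_false, Fin.ext_iff, Fin.isValue]
      norm_num
      split_ifs at hp' ⊢ <;> omega
    · simp [mutate, tri2]

/-- color of the arrow `0 → 1` (resp. `0 → 2`) after `k` mutations. -/
def ak (m c k : ℕ) : ℕ := if c + k ≤ m then c + k else c + k - (m + 1)

/-- multiplicity of the `1 → 2` arrow after `k` mutations. -/
def pk (m c1 c2 k : ℕ) : ℕ :=
  (if k + c2 ≤ m + 1 then 1 else 0) +
  (if c1 = 0 then (if 1 ≤ k then 1 else 0) else (if m + 2 ≤ k + c1 then 1 else 0))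

lemma triQ_eq_tri2 (m c1 c2 : ℕ) :
    triQ m c1 c2 (c2 - c1) = tri2 m c1 c2 (c2 - c1) 1 := by
  funext i j c
  fin_cases i <;> fin_cases j <;> simp [triQ, tri2, Fin.ext_iff] <;> split_ifs <;> rfl

set_option maxHeartbeats 2000000 in
/-- for the triangle `v →^{c₁} u₁`, `v →^{c₂} u₂`,
`u₁ →^{c₂-c₁} u₂` with `c₁ < c₂ ≤ m`, mutating `m+1` times at `v` is the
identity. -/
theorem stmt14 (m c1 c2 : ℕ) (hm : 1 ≤ m) (hlt : c1 < c2) (hle : c2 ≤ m) :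
    (fun R : CQ (Fin 3) => mutate m R 0)^[m + 1] (triQ m c1 c2 (c2 - c1)) =
      triQ m c1 c2 (c2 - c1) := by
  have hd1 : 1 ≤ c2 - c1 := by omega
  have hd : c2 - c1 ≤ m := by omega
  have key : ∀ k, k ≤ m + 1 →
      (fun R : CQ (Fin 3) => mutate m R 0)^[k] (triQ m c1 c2 (c2 - c1)) =
        tri2 m (ak m c1 k) (ak m c2 k) (c2 - c1) (pk m c1 c2 k) := by
    intro k
    induction k with
    | zero =>
        intro _
        simp only [Function.iterate_zero, id_eq, triQ_eq_tri2]
        have h1 : ak m c1 0 = c1 := by simp only [ak]; split_ifs <;> omega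
        have h2 : ak m c2 0 = c2 := by simp only [ak]; split_ifs <;> omega
        have h3 : pk m c1 c2 0 = 1 := by simp only [pk]; split_ifs <;> omega
        rw [h1, h2, h3]
    | succ k ih =>
        intro hk
        rw [Function.iterate_succ_apply', ih (by omega)]
        have ha : ak m c1 k ≤ m := by simp only [ak]; split_ifs <;> omega
        have hb : ak m c2 k ≤ m := by simp only [ak]; split_ifs <;> omega
        have hrel : ak m c2 k = ak m c1 k + (c2 - c1) ∨
            ak m c2 k + (m + 1) = ak m c1 k + (c2 - c1) := by
          simp only [ak]; split_ifs <;> omega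
        have hp : ak m c2 k = 0 → 1 ≤ pk m c1 c2 k := by
          simp only [ak, pk]; split_ifs <;> omega
        have hp' : pk m c1 c2 (k + 1) + (if ak m c2 k = 0 then 1 else 0) =
            pk m c1 c2 k + (if ak m c1 k = 0 then 1 else 0) := by
          simp only [ak, pk]; split_ifs <;> omega
        have ha' : (if ak m c1 k = m then 0 else ak m c1 k + 1) = ak m c1 (k + 1) := by
          simp only [ak]; split_ifs <;> omega
        have hb' : (if ak m c2 k = m then 0 else ak m c2 k + 1) = ak m c2 (k + 1) := by
          simp only [ak]; split_ifs <;> omega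
        rw [step_mut m (ak m c1 k) (ak m c2 k) (c2 - c1) (pk m c1 c2 k)
          (pk m c1 c2 (k + 1)) hm hd1 hd ha hb hrel hp hp', ha', hb']
  have hfin := key (m + 1) le_rfl
  rw [hfin, triQ_eq_tri2]
  have h1 : ak m c1 (m + 1) = c1 := by simp only [ak]; split_ifs <;> omega
  have h2 : ak m c2 (m + 1) = c2 := by simp only [ak]; split_ifs <;> omega
  have h3 : pk m c1 c2 (m + 1) = 1 := by simp [pk]; split_ifs <;> omega
  rw [h1, h2, h3]


end CM
end
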